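/- arXiv:1703.08692 — 3 statements merged into one kernel-verified Lean document; each statement's English description precedes it below -/
import Mathlib

section
/- Let M_A, M_B ∈ ℝ^{2×2} be symmetric positive definite matrices and c_A, c_B ∈ ℝ², and let A, B ∈ ℝ^{3×3} be the corresponding homogeneous ellipse matrices A = [[M_A, −M_A·c_A], [−c_Aᵀ·M_A, c_Aᵀ·M_A·c_A − 1]] and B = [[M_B, −M_B·c_B], [−c_Bᵀ·M_B, c_Bᵀ·M_B·c_B − 1]]. Then the characteristic polynomial f(λ) = det(λ·A − B) always has at least one positive real root, i.e., there exists λ* ∈ ℝ with λ* > 0 and f(λ*) = 0. -/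
/-- The homogeneous matrix of the solid planar ellipse
`{p ∈ ℝ² : (p − c)ᵀ·M·(p − c) ≤ 1}`: in block form `[[M, −M·c], [−cᵀ·M, cᵀ·M·c − 1]]`. -/
def ellipseHomMat (M : Matrix (Fin 2) (Fin 2) ℝ) (c : Fin 2 → ℝ) :
    Matrix (Fin 3) (Fin 3) ℝ :=
  ![![M 0 0, M 0 1, -(M.mulVec c) 0],
    ![M 1 0, M 1 1, -(M.mulVec c) 1],
    ![-(Matrix.vecMul c M) 0, -(Matrix.vecMul c M) 1,
      dotProduct c (M.mulVec c) - 1]]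

lemma det_ellipseHomMat (M : Matrix (Fin 2) (Fin 2) ℝ) (c : Fin 2 → ℝ)
    (hs : M.IsSymm) : (ellipseHomMat M c).det = -M.det := by
  have h10 : M 1 0 = M 0 1 := by
    conv_lhs => rw [← hs]
    rfl
  rw [Matrix.det_fin_three]
  simp [ellipseHomMat, Matrix.det_fin_three, Matrix.det_fin_two, Matrix.mulVec,
    Matrix.vecMul, dotProduct, Fin.sum_univ_two, h10]
  ring

/-- For two solid planar ellipses with symmetric positive definite shape
matrices `M_A, M_B` and centers `c_A, c_B`, the characteristic polynomial
`f(λ) = det(λ·A − B)` of their homogeneous matrices always has at least one positive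
real root. -/
theorem ellipse_charPoly_has_positive_root
    (MA MB : Matrix (Fin 2) (Fin 2) ℝ) (cA cB : Fin 2 → ℝ)
    (hMAsymm : MA.IsSymm) (hMA : MA.PosDef)
    (hMBsymm : MB.IsSymm) (hMB : MB.PosDef) :
    ∃ l : ℝ, 0 < l ∧ (l • ellipseHomMat MA cA - ellipseHomMat MB cB).det = 0 := by
  set A := ellipseHomMat MA cA with hA
  set B := ellipseHomMat MB cB with hB
  set g : ℝ → ℝ := fun l => (l • A - B).det with hg
  have hcont : Continuous g := by
    apply Continuous.matrix_det
    exact (continuous_id.smul continuous_const).sub continuous_const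
  -- g 0 = det MB > 0
  have hg0 : g 0 = MB.det := by
    have : (0 : ℝ) • A - B = -B := by simp
    rw [hg]
    simp only [this]
    rw [Matrix.det_neg, hB, det_ellipseHomMat MB cB hMBsymm]
    norm_num
  have hg0pos : 0 < g 0 := hg0 ▸ hMB.det_pos
  -- for large t, g t < 0
  have hdetA : A.det = -MA.det := det_ellipseHomMat MA cA hMAsymm
  have hAneg : A.det < 0 := by rw [hdetA]; linarith [hMA.det_pos]
  have htend : Filter.Tendsto (fun t : ℝ => (A - t⁻¹ • B).det) Filter.atTop
      (nhds A.det) := by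
    have h1 : Filter.Tendsto (fun t : ℝ => t⁻¹) Filter.atTop (nhds 0) :=
      tendsto_inv_atTop_zero
    have h2 : Continuous fun s : ℝ => (A - s • B).det :=
      Continuous.matrix_det (continuous_const.sub (continuous_id.smul continuous_const))
    have := (h2.tendsto 0).comp h1
    simpa [Function.comp_def] using this
  have hev : ∀ᶠ t : ℝ in Filter.atTop, (A - t⁻¹ • B).det < 0 :=
    htend.eventually (gt_mem_nhds hAneg)
  obtain ⟨t, htneg, ht0⟩ := (hev.and (Filter.eventually_gt_atTop 0)).exists
  have htne : (t : ℝ) ≠ 0 := ne_of_gt ht0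
  have hgt : g t = t ^ 3 * (A - t⁻¹ • B).det := by
    have h3 : t • (A - t⁻¹ • B) = t • A - B := by
      rw [smul_sub, smul_smul, mul_inv_cancel₀ htne, one_smul]
    rw [hg]
    simp only [← h3, Matrix.det_smul]
    norm_num
  have hgtneg : g t < 0 := by
    rw [hgt]
    exact mul_neg_of_pos_of_neg (pow_pos ht0 3) htneg
  have hsub : Set.Ioo (g t) (g 0) ⊆ g '' Set.Ioo 0 t :=
    intermediate_value_Ioo' (le_of_lt ht0) hcont.continuousOn
  obtain ⟨l, hl, hgl⟩ := hsub ⟨hgtneg, hg0pos⟩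
  exact ⟨l, hl.1, hgl⟩
end

section
/- Let M_A, M_B ∈ ℝ^{2×2} be symmetric positive definite matrices and c_A, c_B ∈ ℝ². Let 𝒜 = {p ∈ ℝ² : (p − c_A)ᵀ·M_A·(p − c_A) ≤ 1} and ℬ = {p ∈ ℝ² : (p − c_B)ᵀ·M_B·(p − c_B) ≤ 1} be the corresponding solid ellipses, and let A, B ∈ ℝ^{3×3} be their homogeneous matrices. Then 𝒜 ∩ ℬ = ∅ if and only if there exist two distinct negative real numbers λ1* ≠ λ2* with λ1* < 0, λ2* < 0 such that f(λ1*) = f(λ2*) = 0, where f(λ) = det(λ·A − B); i.e., the ellipses are disjoint if and only if the characteristic equation has two distinct negative real roots. -/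
set_option maxHeartbeats 1600000


/-- The solid planar ellipse `{p ∈ ℝ² : (p − c)ᵀ·M·(p − c) ≤ 1}`. -/
def solidEllipse (M : Matrix (Fin 2) (Fin 2) ℝ) (c : Fin 2 → ℝ) :
    Set (Fin 2 → ℝ) :=
  {p | dotProduct (p - c) (M.mulVec (p - c)) ≤ 1}

/-- positive semidefiniteness of a 2x2 quadratic form, scalar version -/
lemma qf_nonneg {m11 m12 m22 : ℝ} (h1 : 0 < m11) (h2 : 0 < m11*m22 - m12^2) (x y : ℝ) :
    0 ≤ m11*x^2 + 2*m12*x*y + m22*y^2 := by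
  nlinarith [sq_nonneg (m11*x + m12*y), sq_nonneg y, mul_pos h1 h2]

/-- Schur-type: value of the quadratic (y,1)ᵀC(y,1) nonpositive somewhere forces det ≤ 0 -/
lemma schur_le {k11 k12 k22 w1 w2 g y1 y2 : ℝ} (hk : 0 < k11) (hdK : 0 < k11*k22 - k12^2)
    (hQ : k11*y1^2 + 2*k12*y1*y2 + k22*y2^2 + 2*w1*y1 + 2*w2*y2 + g ≤ 0) :
    g*(k11*k22 - k12^2) - k22*w1^2 + 2*k12*w1*w2 - k11*w2^2 ≤ 0 := by
  set dK := k11*k22 - k12^2 with hdKdef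
  have key : k11*dK*(k11*y1^2 + 2*k12*y1*y2 + k22*y2^2 + 2*w1*y1 + 2*w2*y2 + g)
      = dK*(k11*y1 + k12*y2 + w1)^2 + (dK*y2 + k11*w2 - k12*w1)^2
        + k11*(g*dK - k22*w1^2 + 2*k12*w1*w2 - k11*w2^2) := by
    unfold dK; ring
  nlinarith [sq_nonneg (k11*y1 + k12*y2 + w1), sq_nonneg (dK*y2 + k11*w2 - k12*w1),
    mul_nonpos_of_nonneg_of_nonpos (le_of_lt (mul_pos hk hdK)) hQ]

/-- Schur-type: uniformly positive (y,1)-slice forces det > 0 -/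
lemma schur_pos {k11 k12 k22 w1 w2 g e : ℝ} (hk : 0 < k11) (hdK : 0 < k11*k22 - k12^2)
    (he : 0 < e)
    (hQ : ∀ y1 y2 : ℝ, e ≤ k11*y1^2 + 2*k12*y1*y2 + k22*y2^2 + 2*w1*y1 + 2*w2*y2 + g) :
    0 < g*(k11*k22 - k12^2) - k22*w1^2 + 2*k12*w1*w2 - k11*w2^2 := by
  set dK := k11*k22 - k12^2 with hdKdef
  set y2s : ℝ := (k12*w1 - k11*w2)/dK with hy2
  set y1s : ℝ := -(w1 + k12*y2s)/k11 with hy1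
  have h1 := hQ y1s y2s
  have hkne : k11 ≠ 0 := ne_of_gt hk
  have hdKne : dK ≠ 0 := ne_of_gt hdK
  have key : k11*dK*(k11*y1s^2 + 2*k12*y1s*y2s + k22*y2s^2 + 2*w1*y1s + 2*w2*y2s + g)
      = k11*(g*dK - k22*w1^2 + 2*k12*w1*w2 - k11*w2^2) := by
    have hA : k11*y1s + k12*y2s + w1 = 0 := by
      rw [hy1]; field_simp; ring
    have hB : dK*y2s + k11*w2 - k12*w1 = 0 := by
      rw [hy2]; field_simp; ring
    have key2 : k11*dK*(k11*y1s^2 + 2*k12*y1s*y2s + k22*y2s^2 + 2*w1*y1s + 2*w2*y2s + g)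
        = dK*(k11*y1s + k12*y2s + w1)^2 + (dK*y2s + k11*w2 - k12*w1)^2
          + k11*(g*dK - k22*w1^2 + 2*k12*w1*w2 - k11*w2^2) := by
      unfold dK; ring
    rw [hA, hB] at key2; simpa using key2
  nlinarith [mul_pos (mul_pos hk hdK) (lt_of_lt_of_le he h1)]

lemma cubic_mid_pos {a b c d μ1 μ2 : ℝ} (ha : a < 0) (hd : d < 0)
    (h1 : 0 < μ1) (h12 : μ1 < μ2)
    (e1 : a*μ1^3 + b*μ1^2 + c*μ1 + d = 0) (e2 : a*μ2^3 + b*μ2^2 + c*μ2 + d = 0) :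
    0 < a*((μ1+μ2)/2)^3 + b*((μ1+μ2)/2)^2 + c*((μ1+μ2)/2) + d := by
  have hne : μ2 - μ1 ≠ 0 := sub_ne_zero.mpr (ne_of_gt h12)
  have hc : c = -(a*(μ1^2 + μ1*μ2 + μ2^2) + b*(μ1 + μ2)) := by
    have h : (μ2 - μ1) * c = (μ2 - μ1) * (-(a*(μ1^2 + μ1*μ2 + μ2^2) + b*(μ1 + μ2))) := by
      linear_combination e2 - e1
    exact mul_left_cancel₀ hne h
  have hdd : d = μ1*μ2*(a*(μ1+μ2) + b) := by linear_combination e1 - μ1 * hc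
  have he : a*(μ1+μ2) + b < 0 := by
    rcases lt_trichotomy (a*(μ1+μ2) + b) 0 with h|h|h
    · exact h
    · exfalso; rw [hdd, h, mul_zero] at hd; exact lt_irrefl 0 hd
    · exfalso; nlinarith [mul_pos (mul_pos h1 (h1.trans h12)) h]
  set m := (μ1+μ2)/2 with hm
  have key : a*m^3 + b*m^2 + c*m + d = (m - μ1)*(m - μ2)*(a*m + (a*(μ1+μ2)+b)) := by
    rw [hc, hdd, hm]; ring
  rw [key]
  have h1m : 0 < m - μ1 := by rw [hm]; linarith
  have h2m : m - μ2 < 0 := by rw [hm]; linarith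
  have h3m : a*m + (a*(μ1+μ2)+b) < 0 := by
    have : a*m < 0 := mul_neg_of_neg_of_pos ha (by rw [hm]; linarith)
    linarith
  have := mul_neg_of_pos_of_neg h1m h2m
  exact mul_pos_of_neg_of_neg this h3m

lemma cubic_neg_far {a b c d : ℝ} (ha : a < 0) (T : ℝ) (hT1 : 1 ≤ T)
    (hT2 : (|b| + |c| + |d|)/(-a) + 1 ≤ T) :
    a*T^3 + b*T^2 + c*T + d < 0 := by
  set s := |b| + |c| + |d| with hsdef
  have hs : 0 ≤ s := by positivity
  have hna : 0 < -a := by linarith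
  have hTs : s + (-a) ≤ (-a) * T := by
    calc s + (-a) = (-a) * (s/(-a) + 1) := by
          rw [mul_add, mul_one, mul_div_cancel₀ _ (ne_of_gt hna)]
      _ ≤ (-a) * T := mul_le_mul_of_nonneg_left hT2 (le_of_lt hna)
  have hb := le_abs_self b
  have hc := le_abs_self c
  have hdd := le_abs_self d
  have hT0 : 0 < T := by linarith
  have hT2' : (0:ℝ) < T^2 := by positivity
  -- a*T + s ≤ a
  have step1 : a*T + s ≤ a := by linarith
  -- b*T^2 + c*T + d ≤ s*T^2
  have step2 : b*T^2 + c*T + d ≤ s*T^2 := by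
    have h1 : b*T^2 ≤ |b| * T^2 := mul_le_mul_of_nonneg_right hb (le_of_lt hT2')
    have hTT : T ≤ T^2 := by nlinarith
    have hT1sq : (1:ℝ) ≤ T^2 := by nlinarith
    have h2 : c*T ≤ |c| * T^2 := by
      calc c*T ≤ |c| * T := mul_le_mul_of_nonneg_right hc (le_of_lt hT0)
        _ ≤ |c| * T^2 := mul_le_mul_of_nonneg_left hTT (abs_nonneg c)
    have h3 : d ≤ |d| * T^2 := by
      calc d ≤ |d| := hdd
        _ = |d| * 1 := by ring
        _ ≤ |d| * T^2 := mul_le_mul_of_nonneg_left hT1sq (abs_nonneg d)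
    rw [hsdef]; nlinarith
  have step3 : a*T^3 + s*T^2 ≤ a*T^2 := by nlinarith
  have step4 : a*T^2 ≤ a := by nlinarith
  linarith

/-- det(μ·HA + HB) for homogeneous ellipse matrices, as an explicit scalar polynomial. -/
def GG (a11 a12 a22 u1 u2 b11 b12 b22 z1 z2 μ : ℝ) : ℝ :=
  let P := μ*a11 + b11
  let Q := μ*a12 + b12
  let S := μ*a22 + b22
  let R := -(μ*(a11*u1 + a12*u2) + (b11*z1 + b12*z2))
  let T := -(μ*(a12*u1 + a22*u2) + (b12*z1 + b22*z2))
  let W := μ*(a11*u1^2 + 2*a12*u1*u2 + a22*u2^2 - 1) + (b11*z1^2 + 2*b12*z1*z2 + b22*z2^2 - 1)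
  P*(S*W - T^2) - Q*(Q*W - T*R) + R*(Q*T - S*R)



lemma exists_pd_pencil (a11 a12 a22 u1 u2 b11 b12 b22 z1 z2 : ℝ)
    (ha : 0 < a11) (hdA : 0 < a11*a22 - a12^2) (hb : 0 < b11) (hdB : 0 < b11*b22 - b12^2)
    (hdis : ∀ x y : ℝ, a11*(x-u1)^2 + 2*a12*(x-u1)*(y-u2) + a22*(y-u2)^2 ≤ 1 →
        ¬(b11*(x-z1)^2 + 2*b12*(x-z1)*(y-z2) + b22*(y-z2)^2 ≤ 1)) :
    ∃ μ0 e : ℝ, 0 < μ0 ∧ 0 < e ∧ ∀ x y : ℝ,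
      e ≤ μ0*(a11*(x-u1)^2 + 2*a12*(x-u1)*(y-u2) + a22*(y-u2)^2 - 1)
        + (b11*(x-z1)^2 + 2*b12*(x-z1)*(y-z2) + b22*(y-z2)^2 - 1) := by
  have ha22 : 0 < a22 := by nlinarith [sq_nonneg a12]
  have hb22 : 0 < b22 := by nlinarith [sq_nonneg b12]
  -- the solid ellipse B as a set in ℝ × ℝ
  have hBmem : ∀ q : ℝ × ℝ,
      q ∈ ({q : ℝ × ℝ | b11*(q.1-z1)^2 + 2*b12*(q.1-z1)*(q.2-z2) + b22*(q.2-z2)^2 ≤ 1}) ↔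
      b11*(q.1-z1)^2 + 2*b12*(q.1-z1)*(q.2-z2) + b22*(q.2-z2)^2 ≤ 1 := fun q => Iff.rfl
  set Bset : Set (ℝ × ℝ) :=
    {q : ℝ × ℝ | b11*(q.1-z1)^2 + 2*b12*(q.1-z1)*(q.2-z2) + b22*(q.2-z2)^2 ≤ 1} with hBset
  have hBclosed : IsClosed Bset := by
    apply isClosed_le _ continuous_const
    fun_prop
  have hsub : Bset ⊆ Set.Icc (z1 - (Real.sqrt (b22/(b11*b22-b12^2)) + Real.sqrt (b11/(b11*b22-b12^2))),
      z2 - (Real.sqrt (b22/(b11*b22-b12^2)) + Real.sqrt (b11/(b11*b22-b12^2))))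
      (z1 + (Real.sqrt (b22/(b11*b22-b12^2)) + Real.sqrt (b11/(b11*b22-b12^2))),
      z2 + (Real.sqrt (b22/(b11*b22-b12^2)) + Real.sqrt (b11/(b11*b22-b12^2)))) := by
    intro q hq
    have hq' : b11*(q.1-z1)^2 + 2*b12*(q.1-z1)*(q.2-z2) + b22*(q.2-z2)^2 ≤ 1 := hq
    have h1 : (q.1 - z1)^2 ≤ b22/(b11*b22-b12^2) := by
      rw [le_div_iff₀ hdB]
      nlinarith [sq_nonneg (b12*(q.1-z1) + b22*(q.2-z2))]
    have h2 : (q.2 - z2)^2 ≤ b11/(b11*b22-b12^2) := by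
      rw [le_div_iff₀ hdB]
      nlinarith [sq_nonneg (b11*(q.1-z1) + b12*(q.2-z2))]
    have hs1 : |q.1 - z1| ≤ Real.sqrt (b22/(b11*b22-b12^2)) + Real.sqrt (b11/(b11*b22-b12^2)) := by
      calc |q.1 - z1| = Real.sqrt ((q.1 - z1)^2) := (Real.sqrt_sq_eq_abs _).symm
        _ ≤ Real.sqrt (b22/(b11*b22-b12^2)) := Real.sqrt_le_sqrt h1
        _ ≤ _ := le_add_of_nonneg_right (Real.sqrt_nonneg _)
    have hs2 : |q.2 - z2| ≤ Real.sqrt (b22/(b11*b22-b12^2)) + Real.sqrt (b11/(b11*b22-b12^2)) := by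
      calc |q.2 - z2| = Real.sqrt ((q.2 - z2)^2) := (Real.sqrt_sq_eq_abs _).symm
        _ ≤ Real.sqrt (b11/(b11*b22-b12^2)) := Real.sqrt_le_sqrt h2
        _ ≤ _ := le_add_of_nonneg_left (Real.sqrt_nonneg _)
    rw [abs_le] at hs1 hs2
    exact ⟨⟨by dsimp only; linarith [hs1.1], by dsimp only; linarith [hs2.1]⟩,
      ⟨by dsimp only; linarith [hs1.2], by dsimp only; linarith [hs2.2]⟩⟩
  have hBcpt : IsCompact Bset := IsCompact.of_isClosed_subset isCompact_Icc hBclosed hsub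
  have hBne : Bset.Nonempty := ⟨(z1, z2), by rw [hBmem]; norm_num⟩
  obtain ⟨ps, hpsB, hmin⟩ := hBcpt.exists_isMinOn hBne
    (Continuous.continuousOn (by fun_prop :
      Continuous (fun q : ℝ × ℝ => a11*(q.1-u1)^2 + 2*a12*(q.1-u1)*(q.2-u2) + a22*(q.2-u2)^2)))
  have hmin' : ∀ q ∈ Bset, a11*(ps.1-u1)^2 + 2*a12*(ps.1-u1)*(ps.2-u2) + a22*(ps.2-u2)^2
      ≤ a11*(q.1-u1)^2 + 2*a12*(q.1-u1)*(q.2-u2) + a22*(q.2-u2)^2 :=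
    fun q hq => isMinOn_iff.mp hmin q hq
  have hpsB' : b11*(ps.1-z1)^2 + 2*b12*(ps.1-z1)*(ps.2-z2) + b22*(ps.2-z2)^2 ≤ 1 := hpsB
  have hm' : 1 < a11*(ps.1-u1)^2 + 2*a12*(ps.1-u1)*(ps.2-u2) + a22*(ps.2-u2)^2 := by
    by_contra h
    push_neg at h
    exact (hdis ps.1 ps.2 h) hpsB'
  set v1 : ℝ := 2*(a11*(ps.1-u1) + a12*(ps.2-u2)) with hv1
  set v2 : ℝ := 2*(a12*(ps.1-u1) + a22*(ps.2-u2)) with hv2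
  -- first-order optimality
  have hfo : ∀ q ∈ Bset, 0 ≤ v1*(q.1 - ps.1) + v2*(q.2 - ps.2) := by
    intro q hq
    by_contra hD
    push_neg at hD
    set X : ℝ := q.1 - ps.1 with hX
    set Y : ℝ := q.2 - ps.2 with hY
    set D : ℝ := v1*X + v2*Y with hDdef
    set Qd : ℝ := a11*X^2 + 2*a12*X*Y + a22*Y^2 with hQd
    have hQdnn : 0 ≤ Qd := qf_nonneg ha hdA X Y
    set s : ℝ := min 1 ((-D)/(Qd+1)) with hs
    have hs0 : 0 < s := lt_min one_pos (div_pos (by linarith) (by linarith))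
    have hs1 : s ≤ 1 := min_le_left _ _
    have hsle : s*(Qd+1) ≤ -D := by
      have h := min_le_right 1 ((-D)/(Qd+1))
      rw [le_div_iff₀ (by linarith : (0:ℝ) < Qd + 1)] at h
      exact h
    have hqB : q ∈ Bset := hq
    have hq1 : b11*(q.1-z1)^2 + 2*b12*(q.1-z1)*(q.2-z2) + b22*(q.2-z2)^2 ≤ 1 := hq
    -- the convex combination point
    have hqsB : (ps.1 + s*X, ps.2 + s*Y) ∈ Bset := by
      rw [hBmem]
      dsimp only
      have hcvx : b11*((ps.1 + s*X)-z1)^2 + 2*b12*((ps.1 + s*X)-z1)*((ps.2 + s*Y)-z2)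
          + b22*((ps.2 + s*Y)-z2)^2
          = (1-s)*(b11*(ps.1-z1)^2 + 2*b12*(ps.1-z1)*(ps.2-z2) + b22*(ps.2-z2)^2)
            + s*(b11*(q.1-z1)^2 + 2*b12*(q.1-z1)*(q.2-z2) + b22*(q.2-z2)^2)
            - s*(1-s)*(b11*X^2 + 2*b12*X*Y + b22*Y^2) := by
        rw [hX, hY]; ring
      have hqf : 0 ≤ b11*X^2 + 2*b12*X*Y + b22*Y^2 := qf_nonneg hb hdB X Y
      rw [hcvx]
      have t1 : (1-s)*(b11*(ps.1-z1)^2 + 2*b12*(ps.1-z1)*(ps.2-z2) + b22*(ps.2-z2)^2)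
          ≤ (1-s)*1 := mul_le_mul_of_nonneg_left hpsB' (by linarith)
      have t2 : s*(b11*(q.1-z1)^2 + 2*b12*(q.1-z1)*(q.2-z2) + b22*(q.2-z2)^2)
          ≤ s*1 := mul_le_mul_of_nonneg_left hq1 hs0.le
      have t3 : 0 ≤ s*(1-s)*(b11*X^2 + 2*b12*X*Y + b22*Y^2) :=
        mul_nonneg (mul_nonneg hs0.le (by linarith)) hqf
      linarith
    have hgrow := hmin' _ hqsB
    dsimp only at hgrow
    have hexp : a11*((ps.1 + s*X)-u1)^2 + 2*a12*((ps.1 + s*X)-u1)*((ps.2 + s*Y)-u2)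
        + a22*((ps.2 + s*Y)-u2)^2
        = (a11*(ps.1-u1)^2 + 2*a12*(ps.1-u1)*(ps.2-u2) + a22*(ps.2-u2)^2)
          + s*D + s^2*Qd := by
      rw [hDdef, hv1, hv2, hQd, hX, hY]; ring
    rw [hexp] at hgrow
    -- 0 ≤ s*D + s^2*Qd, but s*D + s^2*Qd = s*(D + s*Qd) and D + s*Qd ≤ -s < 0
    have h1 : s*Qd + s ≤ -D := by
      have hexp2 : s*(Qd+1) = s*Qd + s := by ring
      linarith
    have h2 : s*(D + s*Qd) < 0 :=
      mul_neg_of_pos_of_neg hs0 (by linarith)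
    have hid : s*D + s^2*Qd = s*(D + s*Qd) := by ring
    linarith
  -- the gradient is nonzero and the adjugate form is positive
  set q' : ℝ := b22*v1^2 - 2*b12*v1*v2 + b11*v2^2 with hq'def
  have hsos : b22*q' = (b22*v1 - b12*v2)^2 + (b11*b22 - b12^2)*v2^2 := by
    rw [hq'def]; ring
  have hq'nn : 0 ≤ q' := by
    nlinarith [sq_nonneg (b22*v1 - b12*v2), mul_nonneg hdB.le (sq_nonneg v2)]
  have hq'pos : 0 < q' := by
    rcases lt_or_eq_of_le hq'nn with h|h
    · exact h
    · exfalso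
      rw [← h, mul_zero] at hsos
      have hS2 : (b11*b22 - b12^2)*v2^2 = 0 := by
        linarith [sq_nonneg (b22*v1 - b12*v2), mul_nonneg hdB.le (sq_nonneg v2)]
      have hv2z : v2 = 0 :=
        sq_eq_zero_iff.mp ((mul_eq_zero.mp hS2).resolve_left (ne_of_gt hdB))
      have hS1 : (b22*v1 - b12*v2)^2 = 0 := by
        linarith [mul_nonneg hdB.le (sq_nonneg v2)]
      have hv1z : v1 = 0 := by
        have h4 := sq_eq_zero_iff.mp hS1
        rw [hv2z, mul_zero, sub_zero] at h4
        exact (mul_eq_zero.mp h4).resolve_left (ne_of_gt hb22)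
      have e1 : a11*(ps.1-u1) + a12*(ps.2-u2) = 0 := by
        rw [hv1] at hv1z; linarith
      have e2 : a12*(ps.1-u1) + a22*(ps.2-u2) = 0 := by
        rw [hv2] at hv2z; linarith
      have hX0 : ps.1 - u1 = 0 := by
        have h3 : (a11*a22 - a12^2)*(ps.1-u1) = 0 := by linear_combination a22*e1 - a12*e2
        exact (mul_eq_zero.mp h3).resolve_left (ne_of_gt hdA)
      have hY0 : ps.2 - u2 = 0 := by
        have h3 : (a11*a22 - a12^2)*(ps.2-u2) = 0 := by linear_combination a11*e2 - a12*e1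
        exact (mul_eq_zero.mp h3).resolve_left (ne_of_gt hdA)
      rw [hX0, hY0] at hm'
      norm_num at hm'
  -- the touching point construction
  set s0 : ℝ := Real.sqrt (q'*(b11*b22-b12^2)) with hs0def
  have hs0pos : 0 < s0 := Real.sqrt_pos.mpr (mul_pos hq'pos hdB)
  have hs0ne : s0 ≠ 0 := ne_of_gt hs0pos
  have hs0sq : s0^2 = q'*(b11*b22-b12^2) := Real.sq_sqrt (mul_pos hq'pos hdB).le
  set t : ℝ := s0/(2*(b11*b22-b12^2)) with htdef
  have ht : 0 < t := div_pos hs0pos (by linarith)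
  set w1 : ℝ := (b22*v1 - b12*v2)/s0 with hw1def
  set w2 : ℝ := (-(b12*v1) + b11*v2)/s0 with hw2def
  have hw1 : 2*t*(b11*w1 + b12*w2) = v1 := by
    rw [htdef, hw1def, hw2def]
    field_simp
    ring
  have hw2 : 2*t*(b12*w1 + b22*w2) = v2 := by
    rw [htdef, hw1def, hw2def]
    field_simp
    ring
  have hw3 : b11*w1^2 + 2*b12*w1*w2 + b22*w2^2 = 1 := by
    have hcan : s0^2*(b11*w1^2 + 2*b12*w1*w2 + b22*w2^2) = s0^2*1 := by
      have e1 : s0*w1 = b22*v1 - b12*v2 := by rw [hw1def]; field_simp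
      have e2 : s0*w2 = -(b12*v1) + b11*v2 := by rw [hw2def]; field_simp
      have e3 : s0^2*(b11*w1^2 + 2*b12*w1*w2 + b22*w2^2)
          = b11*(s0*w1)^2 + 2*b12*(s0*w1)*(s0*w2) + b22*(s0*w2)^2 := by ring
      rw [e3, e1, e2, mul_one, hs0sq, hq'def]
      ring
    exact mul_left_cancel₀ (pow_ne_zero 2 hs0ne) hcan
  have hphatB : ((z1 - w1, z2 - w2) : ℝ × ℝ) ∈ Bset := by
    rw [hBmem]
    dsimp only
    have e : b11*((z1-w1)-z1)^2 + 2*b12*((z1-w1)-z1)*((z2-w2)-z2) + b22*((z2-w2)-z2)^2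
        = b11*w1^2 + 2*b12*w1*w2 + b22*w2^2 := by ring
    rw [e, hw3]
  have hL : 0 ≤ v1*((z1-w1) - ps.1) + v2*((z2-w2) - ps.2) := by
    have h := hfo _ hphatB
    dsimp only at h
    exact h
  -- the supporting-line inequality valid on the whole plane
  have key1 : ∀ x y : ℝ, v1*((z1-w1) - ps.1) + v2*((z2-w2) - ps.2)
      ≤ v1*(x - ps.1) + v2*(y - ps.2)
        + t*(b11*(x-z1)^2 + 2*b12*(x-z1)*(y-z2) + b22*(y-z2)^2 - 1) := by
    intro x y
    have hid : v1*(x - ps.1) + v2*(y - ps.2)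
        + t*(b11*(x-z1)^2 + 2*b12*(x-z1)*(y-z2) + b22*(y-z2)^2 - 1)
        - (v1*((z1-w1) - ps.1) + v2*((z2-w2) - ps.2))
        = t*(b11*(x-z1+w1)^2 + 2*b12*(x-z1+w1)*(y-z2+w2) + b22*(y-z2+w2)^2) := by
      linear_combination (-(x-z1+w1))*hw1 + (-(y-z2+w2))*hw2 + t*hw3
    have hnn : 0 ≤ t*(b11*(x-z1+w1)^2 + 2*b12*(x-z1+w1)*(y-z2+w2) + b22*(y-z2+w2)^2) :=
      mul_nonneg ht.le (qf_nonneg hb hdB _ _)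
    linarith
  -- convexity lower bound for the A-form
  have key2 : ∀ x y : ℝ,
      (a11*(ps.1-u1)^2 + 2*a12*(ps.1-u1)*(ps.2-u2) + a22*(ps.2-u2)^2)
        + (v1*(x - ps.1) + v2*(y - ps.2))
      ≤ a11*(x-u1)^2 + 2*a12*(x-u1)*(y-u2) + a22*(y-u2)^2 := by
    intro x y
    have hid2 : a11*(x-u1)^2 + 2*a12*(x-u1)*(y-u2) + a22*(y-u2)^2
        = (a11*(ps.1-u1)^2 + 2*a12*(ps.1-u1)*(ps.2-u2) + a22*(ps.2-u2)^2)
          + (v1*(x - ps.1) + v2*(y - ps.2))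
          + (a11*(x-ps.1)^2 + 2*a12*(x-ps.1)*(y-ps.2) + a22*(y-ps.2)^2) := by
      rw [hv1, hv2]; ring
    linarith [qf_nonneg ha hdA (x-ps.1) (y-ps.2)]
  -- conclusion
  refine ⟨1/t, (a11*(ps.1-u1)^2 + 2*a12*(ps.1-u1)*(ps.2-u2) + a22*(ps.2-u2)^2 - 1)/t,
    by positivity, div_pos (by linarith) ht, ?_⟩
  intro x y
  have h12 : (a11*(ps.1-u1)^2 + 2*a12*(ps.1-u1)*(ps.2-u2) + a22*(ps.2-u2)^2 - 1)
      ≤ (a11*(x-u1)^2 + 2*a12*(x-u1)*(y-u2) + a22*(y-u2)^2 - 1)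
        + t*(b11*(x-z1)^2 + 2*b12*(x-z1)*(y-z2) + b22*(y-z2)^2 - 1) := by
    linarith [key2 x y, key1 x y, hL]
  have hmul := mul_le_mul_of_nonneg_left h12 (le_of_lt (one_div_pos.mpr ht))
  have hexp : (1/t)*((a11*(x-u1)^2 + 2*a12*(x-u1)*(y-u2) + a22*(y-u2)^2 - 1)
      + t*(b11*(x-z1)^2 + 2*b12*(x-z1)*(y-z2) + b22*(y-z2)^2 - 1))
      = (1/t)*(a11*(x-u1)^2 + 2*a12*(x-u1)*(y-u2) + a22*(y-u2)^2 - 1)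
        + (b11*(x-z1)^2 + 2*b12*(x-z1)*(y-z2) + b22*(y-z2)^2 - 1) := by
    rw [mul_add, ← mul_assoc, one_div, inv_mul_cancel₀ (ne_of_gt ht), one_mul]
  have hexp2 : (1/t)*(a11*(ps.1-u1)^2 + 2*a12*(ps.1-u1)*(ps.2-u2) + a22*(ps.2-u2)^2 - 1)
      = (a11*(ps.1-u1)^2 + 2*a12*(ps.1-u1)*(ps.2-u2) + a22*(ps.2-u2)^2 - 1)/t := by
    ring
  linarith [hmul, hexp ▸ hmul]

theorem master_iff (a11 a12 a22 u1 u2 b11 b12 b22 z1 z2 : ℝ)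
    (ha : 0 < a11) (hdA : 0 < a11*a22 - a12^2) (hb : 0 < b11) (hdB : 0 < b11*b22 - b12^2) :
    (∀ x y : ℝ, a11*(x-u1)^2 + 2*a12*(x-u1)*(y-u2) + a22*(y-u2)^2 ≤ 1 →
        ¬(b11*(x-z1)^2 + 2*b12*(x-z1)*(y-z2) + b22*(y-z2)^2 ≤ 1)) ↔
    (∃ μ1 μ2 : ℝ, 0 < μ1 ∧ 0 < μ2 ∧ μ1 ≠ μ2 ∧
      GG a11 a12 a22 u1 u2 b11 b12 b22 z1 z2 μ1 = 0 ∧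
      GG a11 a12 a22 u1 u2 b11 b12 b22 z1 z2 μ2 = 0) := by
  set G : ℝ → ℝ := fun μ => GG a11 a12 a22 u1 u2 b11 b12 b22 z1 z2 μ with hGdef
  set aa : ℝ := -(a11*a22 - a12^2) with haa
  set dd : ℝ := -(b11*b22 - b12^2) with hdd
  set bb : ℝ := (G 1 + G (-1))/2 - G 0 with hbb
  set cc : ℝ := (G 1 - G (-1))/2 + (a11*a22 - a12^2) with hcc
  have hpoly : ∀ μ, G μ = aa*μ^3 + bb*μ^2 + cc*μ + dd := by
    intro μ
    simp only [hGdef, haa, hbb, hcc, hdd, GG]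
    ring
  have haneg : aa < 0 := by rw [haa]; linarith
  have hdneg : dd < 0 := by rw [hdd]; linarith
  have hcont : Continuous G := by
    have h : G = fun μ => aa*μ^3 + bb*μ^2 + cc*μ + dd := funext hpoly
    rw [h]; fun_prop
  -- pencil positivity facts
  have hmid : 0 < a11*b22 + a22*b11 - 2*a12*b12 := by
    have ha22 : 0 < a22 := by nlinarith [sq_nonneg a12]
    have hb22 : 0 < b22 := by nlinarith [sq_nonneg b12]
    by_contra hcon
    push_neg at hcon
    have hS : 0 < a11*b22 + a22*b11 := by positivity
    have h3 : (a11*b22 + a22*b11)*(a11*b22 + a22*b11) ≤ (2*(a12*b12))*(2*(a12*b12)) :=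
      mul_self_le_mul_self hS.le (by linarith)
    nlinarith [h3, sq_nonneg (a11*b22 - a22*b11), mul_pos hdA (mul_pos hb hb22),
      mul_nonneg (sq_nonneg a12) hdB.le]
  have hk11 : ∀ μ : ℝ, 0 < μ → 0 < μ*a11 + b11 := by
    intro μ hμ; nlinarith [mul_pos hμ ha]
  have hdK : ∀ μ : ℝ, 0 < μ → 0 < (μ*a11 + b11)*(μ*a22 + b22) - (μ*a12 + b12)^2 := by
    intro μ hμ
    nlinarith [mul_pos (mul_pos hμ hμ) hdA, mul_pos hμ hmid]
  have hGS : ∀ μ : ℝ, G μ =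
      (μ*(a11*u1^2 + 2*a12*u1*u2 + a22*u2^2 - 1) + (b11*z1^2 + 2*b12*z1*z2 + b22*z2^2 - 1))
        *((μ*a11 + b11)*(μ*a22 + b22) - (μ*a12 + b12)^2)
      - (μ*a22 + b22)*(-(μ*(a11*u1 + a12*u2) + (b11*z1 + b12*z2)))^2
      + 2*(μ*a12 + b12)*(-(μ*(a11*u1 + a12*u2) + (b11*z1 + b12*z2)))
          *(-(μ*(a12*u1 + a22*u2) + (b12*z1 + b22*z2)))
      - (μ*a11 + b11)*(-(μ*(a12*u1 + a22*u2) + (b12*z1 + b22*z2)))^2 := by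
    intro μ
    simp only [hGdef, GG]
    ring
  constructor
  · -- disjoint → two distinct positive roots
    intro hdis
    obtain ⟨μ0, e, hμ0, he, hkey⟩ :=
      exists_pd_pencil a11 a12 a22 u1 u2 b11 b12 b22 z1 z2 ha hdA hb hdB hdis
    have hGpos : 0 < G μ0 := by
      rw [hGS μ0]
      apply schur_pos (hk11 μ0 hμ0) (hdK μ0 hμ0) he
      intro y1 y2
      have hid : (μ0*a11 + b11)*y1^2 + 2*(μ0*a12 + b12)*y1*y2 + (μ0*a22 + b22)*y2^2
          + 2*(-(μ0*(a11*u1 + a12*u2) + (b11*z1 + b12*z2)))*y1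
          + 2*(-(μ0*(a12*u1 + a22*u2) + (b12*z1 + b22*z2)))*y2
          + (μ0*(a11*u1^2 + 2*a12*u1*u2 + a22*u2^2 - 1) + (b11*z1^2 + 2*b12*z1*z2 + b22*z2^2 - 1))
          = μ0*(a11*(y1-u1)^2 + 2*a12*(y1-u1)*(y2-u2) + a22*(y2-u2)^2 - 1)
            + (b11*(y1-z1)^2 + 2*b12*(y1-z1)*(y2-z2) + b22*(y2-z2)^2 - 1) := by ring
      rw [hid]
      exact hkey y1 y2
    have hG0 : G 0 = dd := by rw [hpoly 0]; ring
    have hG0neg : G 0 < 0 := by rw [hG0]; exact hdneg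
    obtain ⟨μ1, hμ1mem, hGμ1⟩ :=
      intermediate_value_Ioo hμ0.le hcont.continuousOn ⟨hG0neg, hGpos⟩
    set T : ℝ := max (μ0 + 1) ((|bb| + |cc| + |dd|)/(-aa) + 1) with hT
    have hT1 : 1 ≤ T := le_trans (by linarith) (le_max_left _ _)
    have hμ0T : μ0 < T := lt_of_lt_of_le (by linarith) (le_max_left _ _)
    have hGT : G T < 0 := by
      rw [hpoly T]
      exact cubic_neg_far haneg T hT1 (le_max_right _ _)
    obtain ⟨μ2, hμ2mem, hGμ2⟩ :=
      intermediate_value_Ioo' hμ0T.le hcont.continuousOn ⟨hGT, hGpos⟩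
    exact ⟨μ1, μ2, hμ1mem.1, lt_trans hμ0 hμ2mem.1,
      ne_of_lt (lt_trans hμ1mem.2 hμ2mem.1), hGμ1, hGμ2⟩
  · -- two distinct positive roots → disjoint
    rintro ⟨μ1, μ2, hμ1, hμ2, hne, h1, h2⟩ x y hA hB
    obtain ⟨ν1, ν2, hν1, hν12, hg1, hg2⟩ :
        ∃ ν1 ν2 : ℝ, 0 < ν1 ∧ ν1 < ν2 ∧ G ν1 = 0 ∧ G ν2 = 0 := by
      rcases hne.lt_or_gt with h|h
      · exact ⟨μ1, μ2, hμ1, h, h1, h2⟩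
      · exact ⟨μ2, μ1, hμ2, h, h2, h1⟩
    set m : ℝ := (ν1 + ν2)/2 with hmdef
    have hmpos : 0 < m := by rw [hmdef]; linarith
    have hGm : 0 < G m := by
      rw [hpoly m, hmdef]
      exact cubic_mid_pos haneg hdneg hν1 hν12
        (by rw [← hpoly ν1]; exact hg1) (by rw [← hpoly ν2]; exact hg2)
    have hQle : (m*a11 + b11)*x^2 + 2*(m*a12 + b12)*x*y + (m*a22 + b22)*y^2
        + 2*(-(m*(a11*u1 + a12*u2) + (b11*z1 + b12*z2)))*x
        + 2*(-(m*(a12*u1 + a22*u2) + (b12*z1 + b22*z2)))*y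
        + (m*(a11*u1^2 + 2*a12*u1*u2 + a22*u2^2 - 1) + (b11*z1^2 + 2*b12*z1*z2 + b22*z2^2 - 1))
        ≤ 0 := by
      have hid : (m*a11 + b11)*x^2 + 2*(m*a12 + b12)*x*y + (m*a22 + b22)*y^2
          + 2*(-(m*(a11*u1 + a12*u2) + (b11*z1 + b12*z2)))*x
          + 2*(-(m*(a12*u1 + a22*u2) + (b12*z1 + b22*z2)))*y
          + (m*(a11*u1^2 + 2*a12*u1*u2 + a22*u2^2 - 1) + (b11*z1^2 + 2*b12*z1*z2 + b22*z2^2 - 1))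
          = m*(a11*(x-u1)^2 + 2*a12*(x-u1)*(y-u2) + a22*(y-u2)^2 - 1)
            + (b11*(x-z1)^2 + 2*b12*(x-z1)*(y-z2) + b22*(y-z2)^2 - 1) := by ring
      rw [hid]
      have h1' : m*(a11*(x-u1)^2 + 2*a12*(x-u1)*(y-u2) + a22*(y-u2)^2 - 1) ≤ 0 :=
        mul_nonpos_of_nonneg_of_nonpos hmpos.le (by linarith)
      linarith
    have hSle := schur_le (hk11 m hmpos) (hdK m hmpos) hQle
    rw [← hGS m] at hSle
    linarith

/-- Two solid planar ellipses (with symmetric positive definite shape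
matrices) are disjoint if and only if the characteristic polynomial
`f(λ) = det(λ·A − B)` of their homogeneous matrices has two distinct negative real
roots. -/
theorem ellipses_disjoint_iff_two_distinct_negative_roots
    (MA MB : Matrix (Fin 2) (Fin 2) ℝ) (cA cB : Fin 2 → ℝ)
    (hMAsymm : MA.IsSymm) (hMA : MA.PosDef)
    (hMBsymm : MB.IsSymm) (hMB : MB.PosDef) :
    solidEllipse MA cA ∩ solidEllipse MB cB = ∅ ↔
      ∃ l1 l2 : ℝ, l1 < 0 ∧ l2 < 0 ∧ l1 ≠ l2 ∧
        (l1 • ellipseHomMat MA cA - ellipseHomMat MB cB).det = 0 ∧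
        (l2 • ellipseHomMat MA cA - ellipseHomMat MB cB).det = 0 := by

  have hA10 : MA 1 0 = MA 0 1 := hMAsymm.apply 0 1
  have hB10 : MB 1 0 = MB 0 1 := hMBsymm.apply 0 1
  have ha11 : 0 < MA 0 0 := by
    have h := hMA.dotProduct_mulVec_pos (x := ![1,0]) (by
      intro hc
      have := congrFun hc 0
      norm_num at this)
    simpa [dotProduct, Matrix.mulVec, Fin.sum_univ_two] using h
  have hb11 : 0 < MB 0 0 := by
    have h := hMB.dotProduct_mulVec_pos (x := ![1,0]) (by
      intro hc
      have := congrFun hc 0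
      norm_num at this)
    simpa [dotProduct, Matrix.mulVec, Fin.sum_univ_two] using h
  have hdetA : 0 < MA 0 0 * MA 1 1 - MA 0 1^2 := by
    have h := hMA.det_pos
    rw [Matrix.det_fin_two, hA10] at h
    nlinarith [h]
  have hdetB : 0 < MB 0 0 * MB 1 1 - MB 0 1^2 := by
    have h := hMB.det_pos
    rw [Matrix.det_fin_two, hB10] at h
    nlinarith [h]
  -- membership bridges
  have hmemA : ∀ p : Fin 2 → ℝ, dotProduct (p - cA) (MA.mulVec (p - cA))
      = MA 0 0*(p 0 - cA 0)^2 + 2*(MA 0 1)*(p 0 - cA 0)*(p 1 - cA 1) + MA 1 1*(p 1 - cA 1)^2 := by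
    intro p
    simp [dotProduct, Matrix.mulVec, Fin.sum_univ_two, hA10]
    ring
  have hmemB : ∀ p : Fin 2 → ℝ, dotProduct (p - cB) (MB.mulVec (p - cB))
      = MB 0 0*(p 0 - cB 0)^2 + 2*(MB 0 1)*(p 0 - cB 0)*(p 1 - cB 1) + MB 1 1*(p 1 - cB 1)^2 := by
    intro p
    simp [dotProduct, Matrix.mulVec, Fin.sum_univ_two, hB10]
    ring
  -- determinant bridge
  have hdetbr : ∀ l : ℝ, (l • ellipseHomMat MA cA - ellipseHomMat MB cB).det
      = -(GG (MA 0 0) (MA 0 1) (MA 1 1) (cA 0) (cA 1)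
          (MB 0 0) (MB 0 1) (MB 1 1) (cB 0) (cB 1) (-l)) := by
    intro l
    rw [Matrix.det_fin_three]
    simp only [Matrix.sub_apply, Matrix.smul_apply, smul_eq_mul]
    simp [ellipseHomMat, Matrix.det_fin_three, Matrix.mulVec, Matrix.vecMul,
      dotProduct, Fin.sum_univ_two, GG, hA10, hB10]
    ring
  have hmaster := master_iff (MA 0 0) (MA 0 1) (MA 1 1) (cA 0) (cA 1)
    (MB 0 0) (MB 0 1) (MB 1 1) (cB 0) (cB 1) ha11 hdetA hb11 hdetB
  rw [Set.eq_empty_iff_forall_notMem]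
  constructor
  · intro h
    have hdis : ∀ x y : ℝ,
        MA 0 0*(x - cA 0)^2 + 2*(MA 0 1)*(x - cA 0)*(y - cA 1) + MA 1 1*(y - cA 1)^2 ≤ 1 →
        ¬(MB 0 0*(x - cB 0)^2 + 2*(MB 0 1)*(x - cB 0)*(y - cB 1) + MB 1 1*(y - cB 1)^2 ≤ 1) := by
      intro x y h1 h2
      apply h ![x, y]
      constructor
      · show dotProduct (![x,y] - cA) (MA.mulVec (![x,y] - cA)) ≤ 1
        rw [hmemA]
        simpa using h1
      · show dotProduct (![x,y] - cB) (MB.mulVec (![x,y] - cB)) ≤ 1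
        rw [hmemB]
        simpa using h2
    obtain ⟨μ1, μ2, hμ1, hμ2, hne, h1, h2⟩ := hmaster.mp hdis
    refine ⟨-μ1, -μ2, by linarith, by linarith, by
      intro hc
      exact hne (by linarith [neg_inj.mp hc]), ?_, ?_⟩
    · rw [hdetbr, neg_neg, h1, neg_zero]
    · rw [hdetbr, neg_neg, h2, neg_zero]
  · rintro ⟨l1, l2, hl1, hl2, hne, hd1, hd2⟩ p ⟨hpA, hpB⟩
    rw [hdetbr] at hd1 hd2
    have hroots : ∃ μ1 μ2 : ℝ, 0 < μ1 ∧ 0 < μ2 ∧ μ1 ≠ μ2 ∧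
        GG (MA 0 0) (MA 0 1) (MA 1 1) (cA 0) (cA 1)
          (MB 0 0) (MB 0 1) (MB 1 1) (cB 0) (cB 1) μ1 = 0 ∧
        GG (MA 0 0) (MA 0 1) (MA 1 1) (cA 0) (cA 1)
          (MB 0 0) (MB 0 1) (MB 1 1) (cB 0) (cB 1) μ2 = 0 :=
      ⟨-l1, -l2, by linarith, by linarith,
        fun hc => hne (by linarith [neg_inj.mp hc]),
        neg_eq_zero.mp hd1, neg_eq_zero.mp hd2⟩
    have hpA' : dotProduct (p - cA) (MA.mulVec (p - cA)) ≤ 1 := hpA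
    have hpB' : dotProduct (p - cB) (MB.mulVec (p - cB)) ≤ 1 := hpB
    rw [hmemA] at hpA'
    rw [hmemB] at hpB'
    exact (hmaster.mpr hroots) (p 0) (p 1) hpA' hpB'
end

section
/- Let M_A, M_B ∈ ℝ^{2×2} be symmetric positive definite matrices and c_A, c_B ∈ ℝ². Let 𝒜 = {p ∈ ℝ² : (p − c_A)ᵀ·M_A·(p − c_A) ≤ 1} and ℬ = {p ∈ ℝ² : (p − c_B)ᵀ·M_B·(p − c_B) ≤ 1} be the corresponding solid ellipses, with interiors 𝒜° = {p : (p − c_A)ᵀ·M_A·(p − c_A) < 1} and ℬ° = {p : (p − c_B)ᵀ·M_B·(p − c_B) < 1}, and let A, B ∈ ℝ^{3×3} be their homogeneous matrices. Then 𝒜 ∩ ℬ ≠ ∅ and 𝒜° ∩ ℬ° = ∅ (the ellipses touch externally) if and only if the characteristic polynomial f(λ) = det(λ·A − B) has a negative real root of multiplicity at least two, i.e., there exists λ* < 0 with f(λ*) = 0 and f′(λ*) = 0. -/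
open Matrix

/-- Scalar form of `t ↦ det (t • A - B)` for two ellipse homogeneous matrices. -/
noncomputable def Fs (a0 a1 a3 b0 b1 b3 p q r s : ℝ) (t : ℝ) : ℝ :=
  (t*a0 - b0) * ((t*a3-b3)*(t*(p*(a0*p+a1*q)+q*(a1*p+a3*q)-1) - (r*(b0*r+b1*s)+s*(b1*r+b3*s)-1))
      - (t*(-(a1*p+a3*q)) - -(b1*r+b3*s))*(t*(-(a1*p+a3*q)) - -(b1*r+b3*s)))
  - (t*a1-b1) * ((t*a1-b1)*(t*(p*(a0*p+a1*q)+q*(a1*p+a3*q)-1) - (r*(b0*r+b1*s)+s*(b1*r+b3*s)-1))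
      - (t*(-(a1*p+a3*q)) - -(b1*r+b3*s))*(t*(-(a0*p+a1*q)) - -(b0*r+b1*s)))
  + (t*(-(a0*p+a1*q)) - -(b0*r+b1*s)) * ((t*a1-b1)*(t*(-(a1*p+a3*q)) - -(b1*r+b3*s))
      - (t*a3-b3)*(t*(-(a0*p+a1*q)) - -(b0*r+b1*s)))

/-- `D² ·` (minimum value of `m·(q_A - 1) + (q_B - 1)`). -/
noncomputable def Ws (a0 a1 a3 b0 b1 b3 p q r s m : ℝ) : ℝ :=
  let n0 := m*a0+b0; let n1 := m*a1+b1; let n3 := m*a3+b3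
  let u0 := m*(a0*p+a1*q)+(b0*r+b1*s); let u1 := m*(a1*p+a3*q)+(b1*r+b3*s)
  let D := n0*n3-n1*n1
  let X := n3*u0-n1*u1; let Y := n0*u1-n1*u0
  D*D*(-m-1) + m*(a0*(X-p*D)^2+2*a1*(X-p*D)*(Y-q*D)+a3*(Y-q*D)^2)
    + (b0*(X-r*D)^2+2*b1*(X-r*D)*(Y-s*D)+b3*(Y-s*D)^2)

theorem Fs_differentiable (a0 a1 a3 b0 b1 b3 p q r s : ℝ) :
    Differentiable ℝ (Fs a0 a1 a3 b0 b1 b3 p q r s) := by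
  unfold Fs; fun_prop

theorem idI (a0 a1 a3 b0 b1 b3 p q r s m : ℝ) :
    -(Fs a0 a1 a3 b0 b1 b3 p q r s (-m)) * ((m*a0+b0)*(m*a3+b3)-(m*a1+b1)*(m*a1+b1))
      = Ws a0 a1 a3 b0 b1 b3 p q r s m := by
  simp only [Fs, Ws]; ring

theorem idII (a0 a1 a3 b0 b1 b3 p q r s m x y : ℝ) :
    ((m*a0+b0)*(m*a3+b3)-(m*a1+b1)*(m*a1+b1))^2 *
      (m*((a0*(x-p)^2+2*a1*(x-p)*(y-q)+a3*(y-q)^2)-1)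
        + ((b0*(x-r)^2+2*b1*(x-r)*(y-s)+b3*(y-s)^2)-1))
      - Ws a0 a1 a3 b0 b1 b3 p q r s m
      = (m*a0+b0)*(x*((m*a0+b0)*(m*a3+b3)-(m*a1+b1)*(m*a1+b1))
            - ((m*a3+b3)*(m*(a0*p+a1*q)+(b0*r+b1*s))-(m*a1+b1)*(m*(a1*p+a3*q)+(b1*r+b3*s))))^2
        + 2*(m*a1+b1)*(x*((m*a0+b0)*(m*a3+b3)-(m*a1+b1)*(m*a1+b1))
            - ((m*a3+b3)*(m*(a0*p+a1*q)+(b0*r+b1*s))-(m*a1+b1)*(m*(a1*p+a3*q)+(b1*r+b3*s))))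
          *(y*((m*a0+b0)*(m*a3+b3)-(m*a1+b1)*(m*a1+b1))
            - ((m*a0+b0)*(m*(a1*p+a3*q)+(b1*r+b3*s))-(m*a1+b1)*(m*(a0*p+a1*q)+(b0*r+b1*s))))
        + (m*a3+b3)*(y*((m*a0+b0)*(m*a3+b3)-(m*a1+b1)*(m*a1+b1))
            - ((m*a0+b0)*(m*(a1*p+a3*q)+(b1*r+b3*s))-(m*a1+b1)*(m*(a0*p+a1*q)+(b0*r+b1*s))))^2 := by
  simp only [Ws]; ring

/-- Scalar form of the quadratic form of an ellipse. -/
theorem quad_eq (M : Matrix (Fin 2) (Fin 2) ℝ) (hs : M 1 0 = M 0 1) (c w : Fin 2 → ℝ) :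
    dotProduct (w - c) (M.mulVec (w - c))
      = M 0 0*(w 0 - c 0)^2 + 2*(M 0 1)*(w 0 - c 0)*(w 1 - c 1) + M 1 1*(w 1 - c 1)^2 := by
  simp [dotProduct, Matrix.mulVec, Fin.sum_univ_two, hs]; ring

theorem quad_pos {M : Matrix (Fin 2) (Fin 2) ℝ} (hM : M.PosDef) (hs : M 1 0 = M 0 1)
    {x y : ℝ} (h : ¬(x = 0 ∧ y = 0)) :
    0 < M 0 0*x^2 + 2*(M 0 1)*x*y + M 1 1*y^2 := by
  have hv : (![x, y] : Fin 2 → ℝ) ≠ 0 := by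
    intro h0
    exact h ⟨congrFun h0 0, congrFun h0 1⟩
  have := hM.dotProduct_mulVec_pos hv
  simp only [star_trivial, dotProduct, Matrix.mulVec, Fin.sum_univ_two] at this
  simp only [Matrix.cons_val_zero, Matrix.cons_val_one, Matrix.head_cons] at this
  have h2 : M 0 0*x^2 + 2*(M 0 1)*x*y + M 1 1*y^2
      = x * (M 0 0 * x + M 0 1 * y) + y * (M 1 0 * x + M 1 1 * y) := by rw [hs]; ring
  rw [h2]; exact this

theorem quad_nonneg {M : Matrix (Fin 2) (Fin 2) ℝ} (hM : M.PosDef) (hs : M 1 0 = M 0 1)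
    (x y : ℝ) : 0 ≤ M 0 0*x^2 + 2*(M 0 1)*x*y + M 1 1*y^2 := by
  by_cases h : x = 0 ∧ y = 0
  · obtain ⟨hx, hy⟩ := h; simp [hx, hy]
  · exact (quad_pos hM hs h).le

theorem dot_self_pos {n : Type*} [Fintype n] {a : n → ℝ} (ha : a ≠ 0) :
    0 < dotProduct a a := by
  have h0 : 0 ≤ dotProduct a a :=
    Finset.sum_nonneg fun i _ => mul_self_nonneg (a i)
  rcases h0.lt_or_eq with h | h
  · exact h
  · exact absurd (dotProduct_self_eq_zero.mp h.symm) ha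

/-- If there is no direction along which both dot products are negative, the two
nonzero vectors are anti-parallel with a positive ratio. -/
theorem antiparallel {n : Type*} [Fintype n] {a b : n → ℝ} (ha : a ≠ 0) (hb : b ≠ 0)
    (H : ∀ v : n → ℝ, 0 ≤ dotProduct a v ∨ 0 ≤ dotProduct b v) :
    ∃ μ : ℝ, 0 < μ ∧ μ • a + b = 0 := by
  have hα : 0 < dotProduct a a := dot_self_pos ha
  set α := dotProduct a a with hαdef
  set t : ℝ := dotProduct a b / α with htdef
  set c : n → ℝ := b - t • a with hcdef
  have hac : dotProduct a c = 0 := by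
    simp only [hcdef, dotProduct_sub, dotProduct_smul, smul_eq_mul, htdef]
    field_simp
    rw [← hαdef]; ring
  have hbc : b = t • a + c := by simp [hcdef]
  have hc0 : c = 0 := by
    by_contra hc
    have hβ : 0 < dotProduct c c := dot_self_pos hc
    set β := dotProduct c c
    set s : ℝ := (|dotProduct a b| + 1) / β with hsdef
    set v : n → ℝ := -a - s • c with hvdef
    have hav : dotProduct a v = -α := by
      simp only [hvdef, dotProduct_sub, dotProduct_neg, dotProduct_smul,
        smul_eq_mul, hac]
      ring
    have hcv : dotProduct c v = -(s * β) := by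
      simp only [hvdef, dotProduct_sub, dotProduct_neg, dotProduct_smul,
        smul_eq_mul]
      have hca : dotProduct c a = 0 := by rw [dotProduct_comm]; exact hac
      rw [hca]
      ring
    have hbv : dotProduct b v = -(t * α) - s * β := by
      rw [hbc, add_dotProduct, smul_dotProduct, smul_eq_mul, hav, hcv]
      ring
    have hsβ : s * β = |dotProduct a b| + 1 := by
      rw [hsdef]; field_simp
    have htα : t * α = dotProduct a b := by
      rw [htdef]; field_simp
    rcases H v with h | h
    · rw [hav] at h; linarith
    · rw [hbv, hsβ, htα] at h
      have := abs_nonneg (dotProduct a b)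
      have := neg_abs_le (dotProduct a b)
      linarith
  have hba : b = t • a := by rw [hbc, hc0, add_zero]
  have ht : t < 0 := by
    by_contra hts
    push_neg at hts
    rcases H (-a) with h | h
    · rw [dotProduct_neg] at h; linarith
    · rw [hba, smul_dotProduct, dotProduct_neg, smul_eq_mul] at h
      have ht0 : t = 0 := by nlinarith
      rw [ht0, zero_smul] at hba
      exact hb hba
  refine ⟨-t, by linarith, ?_⟩
  rw [hba]
  ext i
  simp [smul_smul]



/-- The open planar ellipse `{p ∈ ℝ² : (p − c)ᵀ·M·(p − c) < 1}` (the interior of the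
solid ellipse). -/
def openEllipse (M : Matrix (Fin 2) (Fin 2) ℝ) (c : Fin 2 → ℝ) :
    Set (Fin 2 → ℝ) :=
  {p | dotProduct (p - c) (M.mulVec (p - c)) < 1}

theorem quad_expand (M : Matrix (Fin 2) (Fin 2) ℝ) (h10 : M 1 0 = M 0 1)
    (w v : Fin 2 → ℝ) (e : ℝ) :
    dotProduct (w + e • v) (M.mulVec (w + e • v))
      = dotProduct w (M.mulVec w) + 2*e*(dotProduct (M.mulVec w) v)
        + e^2 * dotProduct v (M.mulVec v) := by
  simp [dotProduct, Matrix.mulVec, Fin.sum_univ_two, h10]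
  ring

/-- If a point is in both solid ellipses and the open ellipses are disjoint, the point
is on the boundary of the first ellipse. -/
theorem boundary_touch {M1 M2 : Matrix (Fin 2) (Fin 2) ℝ} {c1 c2 p0 : Fin 2 → ℝ}
    (h110 : M1 1 0 = M1 0 1)
    (h1 : dotProduct (p0 - c1) (M1.mulVec (p0 - c1)) ≤ 1)
    (h2 : dotProduct (p0 - c2) (M2.mulVec (p0 - c2)) ≤ 1)
    (hdisj : openEllipse M1 c1 ∩ openEllipse M2 c2 = ∅) :
    dotProduct (p0 - c1) (M1.mulVec (p0 - c1)) = 1 := by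
  by_contra hne
  have hlt : dotProduct (p0 - c1) (M1.mulVec (p0 - c1)) < 1 := lt_of_le_of_ne h1 hne
  set w : ℝ → (Fin 2 → ℝ) := fun t => c2 + t • (p0 - c2) with hw
  have hGeq : (fun t : ℝ => dotProduct (w t - c1) (M1.mulVec (w t - c1)))
      = fun t : ℝ => M1 0 0*((c2 0 - c1 0)+t*(p0 0 - c2 0))^2
        + 2*(M1 0 1)*((c2 0 - c1 0)+t*(p0 0 - c2 0))*((c2 1 - c1 1)+t*(p0 1 - c2 1))
        + M1 1 1*((c2 1 - c1 1)+t*(p0 1 - c2 1))^2 := by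
    funext t
    rw [quad_eq M1 h110]
    simp [hw]
    ring
  have hcont : Continuous (fun t : ℝ => dotProduct (w t - c1) (M1.mulVec (w t - c1))) := by
    rw [hGeq]; fun_prop
  have hw1 : w 1 = p0 := by funext i; simp [hw]
  have hev : ∀ᶠ t in nhds (1:ℝ),
      dotProduct (w t - c1) (M1.mulVec (w t - c1)) < 1 := by
    have htend := hcont.continuousAt (x := (1:ℝ))
    rw [ContinuousAt, hw1] at htend
    exact htend.eventually_lt_const hlt
  have hev2 : ∀ᶠ t in nhds (1:ℝ), (1:ℝ)/2 < t := eventually_gt_nhds (by norm_num)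
  obtain ⟨ε, hε, hball⟩ := Metric.eventually_nhds_iff.mp (hev.and hev2)
  set t0 : ℝ := 1 - min (ε/2) (1/4) with ht0
  have hmin1 : (0:ℝ) < min (ε/2) (1/4) := lt_min (by linarith) (by norm_num)
  have hmin2 : min (ε/2) (1/4) ≤ ε/2 := min_le_left _ _
  have hmin3 : min (ε/2) (1/4) ≤ 1/4 := min_le_right _ _
  have hd : dist t0 1 < ε := by
    rw [Real.dist_eq, ht0]
    rw [abs_of_nonpos (by linarith)]
    linarith
  obtain ⟨hq1, hhalf⟩ := hball hd
  have ht0lt : t0 < 1 := by rw [ht0]; linarith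
  have ht0pos : 0 < t0 := by rw [ht0]; linarith
  have hq2 : dotProduct (w t0 - c2) (M2.mulVec (w t0 - c2)) < 1 := by
    have hwc2 : w t0 - c2 = t0 • (p0 - c2) := by funext i; simp [hw]
    rw [hwc2, Matrix.mulVec_smul, dotProduct_smul, smul_dotProduct,
      smul_eq_mul, smul_eq_mul]
    have hsq : t0 * t0 < 1 := by nlinarith
    have hle : t0 * (t0 * dotProduct (p0 - c2) (M2.mulVec (p0 - c2))) ≤ t0 * t0 := by
      have h3 : t0 * dotProduct (p0 - c2) (M2.mulVec (p0 - c2)) ≤ t0 * 1 :=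
        mul_le_mul_of_nonneg_left h2 ht0pos.le
      nlinarith [h3]
    linarith
  have : w t0 ∈ openEllipse M1 c1 ∩ openEllipse M2 c2 := ⟨hq1, hq2⟩
  rw [hdisj] at this
  exact this

/-- If `(xs, ys)` is the critical point of the combined quadratic
`G_m = m·(q_A - 1) + (q_B - 1)`, then `D² · G_m(xs,ys) = Ws`. -/
theorem starVal (a0 a1 a3 b0 b1 b3 p q r s m xs ys : ℝ)
    (hz1 : xs*((m*a0+b0)*(m*a3+b3)-(m*a1+b1)*(m*a1+b1)) - ((m*a3+b3)*(m*(a0*p+a1*q)+(b0*r+b1*s))-(m*a1+b1)*(m*(a1*p+a3*q)+(b1*r+b3*s))) = 0)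
    (hz2 : ys*((m*a0+b0)*(m*a3+b3)-(m*a1+b1)*(m*a1+b1)) - ((m*a0+b0)*(m*(a1*p+a3*q)+(b1*r+b3*s))-(m*a1+b1)*(m*(a0*p+a1*q)+(b0*r+b1*s))) = 0) :
    ((m*a0+b0)*(m*a3+b3)-(m*a1+b1)*(m*a1+b1))^2 * (m*((a0*(xs-p)^2+2*a1*(xs-p)*(ys-q)+a3*(ys-q)^2)-1)
        + ((b0*(xs-r)^2+2*b1*(xs-r)*(ys-s)+b3*(ys-s)^2)-1))
      = Ws a0 a1 a3 b0 b1 b3 p q r s m := by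
  linear_combination (idII a0 a1 a3 b0 b1 b3 p q r s m xs ys)
    + ((m*a0+b0)*(xs*((m*a0+b0)*(m*a3+b3)-(m*a1+b1)*(m*a1+b1)) - ((m*a3+b3)*(m*(a0*p+a1*q)+(b0*r+b1*s))-(m*a1+b1)*(m*(a1*p+a3*q)+(b1*r+b3*s)))) + 2*(m*a1+b1)*(ys*((m*a0+b0)*(m*a3+b3)-(m*a1+b1)*(m*a1+b1)) - ((m*a0+b0)*(m*(a1*p+a3*q)+(b1*r+b3*s))-(m*a1+b1)*(m*(a0*p+a1*q)+(b0*r+b1*s)))))*hz1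
    + ((m*a3+b3)*(ys*((m*a0+b0)*(m*a3+b3)-(m*a1+b1)*(m*a1+b1)) - ((m*a0+b0)*(m*(a1*p+a3*q)+(b1*r+b3*s))-(m*a1+b1)*(m*(a0*p+a1*q)+(b0*r+b1*s)))))*hz2


set_option maxHeartbeats 4000000 in
/-- Two solid planar ellipses (with symmetric positive definite shape
matrices) touch externally — their closed sets intersect but their interiors do not —
if and only if the characteristic polynomial `f(λ) = det(λ·A − B)` has a negative real
root of multiplicity at least two, i.e., there is `λ* < 0` with `f(λ*) = 0` and
`f′(λ*) = 0`. -/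
theorem ellipses_touch_externally_iff_negative_double_root
    (MA MB : Matrix (Fin 2) (Fin 2) ℝ) (cA cB : Fin 2 → ℝ)
    (hMAsymm : MA.IsSymm) (hMA : MA.PosDef)
    (hMBsymm : MB.IsSymm) (hMB : MB.PosDef) :
    (solidEllipse MA cA ∩ solidEllipse MB cB ≠ ∅ ∧
        openEllipse MA cA ∩ openEllipse MB cB = ∅) ↔
      ∃ l : ℝ, l < 0 ∧
        (fun t : ℝ => (t • ellipseHomMat MA cA - ellipseHomMat MB cB).det) l = 0 ∧
        deriv (fun t : ℝ => (t • ellipseHomMat MA cA - ellipseHomMat MB cB).det) l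
          = 0 := by
  have hA10 : MA 1 0 = MA 0 1 := (hMAsymm.apply 1 0).symm
  have hB10 : MB 1 0 = MB 0 1 := (hMBsymm.apply 1 0).symm
  have hFeq : (fun t : ℝ => (t • ellipseHomMat MA cA - ellipseHomMat MB cB).det)
      = Fs (MA 0 0) (MA 0 1) (MA 1 1) (MB 0 0) (MB 0 1) (MB 1 1) (cA 0) (cA 1) (cB 0) (cB 1) := by
    funext t
    rw [Matrix.det_fin_three]
    simp only [Matrix.sub_apply, Matrix.smul_apply, smul_eq_mul]
    simp [Matrix.det_fin_three, ellipseHomMat, Matrix.mulVec, Matrix.vecMul,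
      dotProduct, Fin.sum_univ_two, Fs, hA10, hB10]
    ring
  rw [hFeq]
  -- scalar positivity facts
  have hQA : ∀ x y : ℝ, 0 ≤ (MA 0 0)*x^2+2*(MA 0 1)*x*y+(MA 1 1)*y^2 :=
    fun x y => quad_nonneg hMA hA10 x y
  have hQB : ∀ x y : ℝ, 0 ≤ (MB 0 0)*x^2+2*(MB 0 1)*x*y+(MB 1 1)*y^2 :=
    fun x y => quad_nonneg hMB hB10 x y
  have hQBpos : ∀ x y : ℝ, ¬(x = 0 ∧ y = 0) → 0 < (MB 0 0)*x^2+2*(MB 0 1)*x*y+(MB 1 1)*y^2 :=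
    fun x y h => quad_pos hMB hB10 h
  have hQnn : ∀ nu : ℝ, 0 ≤ nu → ∀ x y : ℝ,
      0 ≤ (nu*(MA 0 0)+(MB 0 0))*x^2+2*(nu*(MA 0 1)+(MB 0 1))*x*y+(nu*(MA 1 1)+(MB 1 1))*y^2 := by
    intro nu hnu x y
    nlinarith [hQA x y, hQB x y, mul_nonneg hnu (hQA x y)]
  have hDpos : ∀ nu : ℝ, 0 ≤ nu → 0 < ((nu*(MA 0 0)+(MB 0 0))*(nu*(MA 1 1)+(MB 1 1))-(nu*(MA 0 1)+(MB 0 1))*(nu*(MA 0 1)+(MB 0 1))) := by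
    intro nu hnu
    have hb0 : 0 < (MB 0 0) := by
      have := quad_pos hMB hB10 (x := 1) (y := 0) (by simp)
      nlinarith [this]
    have ha0 : 0 ≤ (MA 0 0) := by
      have := hQA 1 0
      nlinarith [this]
    have hn0 : 0 < nu*(MA 0 0)+(MB 0 0) := by nlinarith [mul_nonneg hnu ha0]
    have hcomb : 0 < (nu*(MA 0 0)+(MB 0 0))*((nu*(MA 0 1)+(MB 0 1)))^2
        + 2*(nu*(MA 0 1)+(MB 0 1))*((nu*(MA 0 1)+(MB 0 1)))*(-((nu*(MA 0 0)+(MB 0 0))))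
        + (nu*(MA 1 1)+(MB 1 1))*(-((nu*(MA 0 0)+(MB 0 0))))^2 := by
      have h1 := hQA ((nu*(MA 0 1)+(MB 0 1))) (-((nu*(MA 0 0)+(MB 0 0))))
      have h2 := hQBpos ((nu*(MA 0 1)+(MB 0 1))) (-((nu*(MA 0 0)+(MB 0 0))))
        (fun hc => hn0.ne' (neg_eq_zero.mp hc.2))
      nlinarith [mul_nonneg hnu h1, h2]
    have key2 : 0 < (nu*(MA 0 0)+(MB 0 0)) * (((nu*(MA 0 0)+(MB 0 0))*(nu*(MA 1 1)+(MB 1 1))-(nu*(MA 0 1)+(MB 0 1))*(nu*(MA 0 1)+(MB 0 1)))) := by nlinarith [hcomb]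
    have h7 := div_pos key2 hn0
    rwa [mul_div_cancel_left₀ _ hn0.ne'] at h7
  -- the envelope bound : φ(nu) ≤ G_nu(x,y) for every point (x,y) and nu > 0
  have hphile : ∀ x y nu : ℝ, 0 < nu →
      -(Fs (MA 0 0) (MA 0 1) (MA 1 1) (MB 0 0) (MB 0 1) (MB 1 1) (cA 0) (cA 1) (cB 0) (cB 1) (-nu)) / ((nu*(MA 0 0)+(MB 0 0))*(nu*(MA 1 1)+(MB 1 1))-(nu*(MA 0 1)+(MB 0 1))*(nu*(MA 0 1)+(MB 0 1)))
        ≤ nu*(((MA 0 0)*(x-(cA 0))^2+2*(MA 0 1)*(x-(cA 0))*(y-(cA 1))+(MA 1 1)*(y-(cA 1))^2)-1) + (((MB 0 0)*(x-(cB 0))^2+2*(MB 0 1)*(x-(cB 0))*(y-(cB 1))+(MB 1 1)*(y-(cB 1))^2)-1) := by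
    intro x y nu hnu
    have hD := hDpos nu hnu.le
    have h1 := idI (MA 0 0) (MA 0 1) (MA 1 1) (MB 0 0) (MB 0 1) (MB 1 1) (cA 0) (cA 1) (cB 0) (cB 1) nu
    have h2 := idII (MA 0 0) (MA 0 1) (MA 1 1) (MB 0 0) (MB 0 1) (MB 1 1) (cA 0) (cA 1) (cB 0) (cB 1) nu x y
    have h3 := hQnn nu hnu.le (x*((nu*(MA 0 0)+(MB 0 0))*(nu*(MA 1 1)+(MB 1 1))-(nu*(MA 0 1)+(MB 0 1))*(nu*(MA 0 1)+(MB 0 1))) - ((nu*(MA 1 1)+(MB 1 1))*(nu*((MA 0 0)*(cA 0)+(MA 0 1)*(cA 1))+((MB 0 0)*(cB 0)+(MB 0 1)*(cB 1)))-(nu*(MA 0 1)+(MB 0 1))*(nu*((MA 0 1)*(cA 0)+(MA 1 1)*(cA 1))+((MB 0 1)*(cB 0)+(MB 1 1)*(cB 1))))) (y*((nu*(MA 0 0)+(MB 0 0))*(nu*(MA 1 1)+(MB 1 1))-(nu*(MA 0 1)+(MB 0 1))*(nu*(MA 0 1)+(MB 0 1))) - ((nu*(MA 0 0)+(MB 0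 0))*(nu*((MA 0 1)*(cA 0)+(MA 1 1)*(cA 1))+((MB 0 1)*(cB 0)+(MB 1 1)*(cB 1)))-(nu*(MA 0 1)+(MB 0 1))*(nu*((MA 0 0)*(cA 0)+(MA 0 1)*(cA 1))+((MB 0 0)*(cB 0)+(MB 0 1)*(cB 1)))))
    rw [div_le_iff₀ hD]
    have key : ((nu*(MA 0 0)+(MB 0 0))*(nu*(MA 1 1)+(MB 1 1))-(nu*(MA 0 1)+(MB 0 1))*(nu*(MA 0 1)+(MB 0 1))) * ((nu*(((MA 0 0)*(x-(cA 0))^2+2*(MA 0 1)*(x-(cA 0))*(y-(cA 1))+(MA 1 1)*(y-(cA 1))^2)-1) + (((MB 0 0)*(x-(cB 0))^2+2*(MB 0 1)*(x-(cB 0))*(y-(cB 1))+(MB 1 1)*(y-(cB 1))^2)-1)) * ((nu*(MA 0 0)+(MB 0 0))*(nu*(MA 1 1)+(MB 1 1))-(nu*(MA 0 1)+(MB 0 1))*(nu*(MA 0 1)+(MB 0 1)))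
        + Fs (MA 0 0) (MA 0 1) (MA 1 1) (MB 0 0) (MB 0 1) (MB 1 1) (cA 0) (cA 1) (cB 0) (cB 1) (-nu)) = (nu*(MA 0 0)+(MB 0 0))*(x*((nu*(MA 0 0)+(MB 0 0))*(nu*(MA 1 1)+(MB 1 1))-(nu*(MA 0 1)+(MB 0 1))*(nu*(MA 0 1)+(MB 0 1))) - ((nu*(MA 1 1)+(MB 1 1))*(nu*((MA 0 0)*(cA 0)+(MA 0 1)*(cA 1))+((MB 0 0)*(cB 0)+(MB 0 1)*(cB 1)))-(nu*(MA 0 1)+(MB 0 1))*(nu*((MA 0 1)*(cA 0)+(MA 1 1)*(cA 1))+((MB 0 1)*(cB 0)+(MB 1 1)*(cB 1)))))^2 + 2*(nu*(MA 0 1)+(MB 0 1))*(x*((nu*(MA 0 0)+(MB 0 0))*(nu*(MA 1 1)+(MB 1 1))-(nu*(MA 0 1)+(MB 0 1))*(nu*(MA 0 1)+(MB 0 1))) - ((nu*(MA 1 1)+(MB 1 1))*(nu*((MA 0 0)*(cA 0)+(MA 0 1)*(cA 1))+((MB 0 0)*(cB 0)+(MB 0 1)*(cB 1)))-(nu*(MA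 0 1)+(MB 0 1))*(nu*((MA 0 1)*(cA 0)+(MA 1 1)*(cA 1))+((MB 0 1)*(cB 0)+(MB 1 1)*(cB 1)))))*(y*((nu*(MA 0 0)+(MB 0 0))*(nu*(MA 1 1)+(MB 1 1))-(nu*(MA 0 1)+(MB 0 1))*(nu*(MA 0 1)+(MB 0 1))) - ((nu*(MA 0 0)+(MB 0 0))*(nu*((MA 0 1)*(cA 0)+(MA 1 1)*(cA 1))+((MB 0 1)*(cB 0)+(MB 1 1)*(cB 1)))-(nu*(MA 0 1)+(MB 0 1))*(nu*((MA 0 0)*(cA 0)+(MA 0 1)*(cA 1))+((MB 0 0)*(cB 0)+(MB 0 1)*(cB 1))))) + (nu*(MA 1 1)+(MB 1 1))*(y*((nu*(MA 0 0)+(MB 0 0))*(nu*(MA 1 1)+(MB 1 1))-(nu*(MA 0 1)+(MB 0 1))*(nu*(MA 0 1)+(MB 0 1))) - ((nu*(MA 0 0)+(MB 0 0))*(nu*((MA 0 1)*(cA 0)+(MA 1 1)*(cA 1))+((MB 0 1)*(cB 0)+(MB 1 1)*(cB 1)))-(nu*(MA 0 1)+(MB 0 1))*(nu*((MA 0 0)*(cA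 0)+(MA 0 1)*(cA 1))+((MB 0 0)*(cB 0)+(MB 0 1)*(cB 1)))))^2 := by
      linear_combination h2 - h1
    rw [← key] at h3
    have h4 := (mul_nonneg_iff_of_pos_left hD).mp h3
    linarith [h4]
  -- derivative of φ at a zero of Fs(-·)
  have hder : ∀ m : ℝ, 0 < m → Fs (MA 0 0) (MA 0 1) (MA 1 1) (MB 0 0) (MB 0 1) (MB 1 1) (cA 0) (cA 1) (cB 0) (cB 1) (-m) = 0 →
      HasDerivAt (fun nu : ℝ => -(Fs (MA 0 0) (MA 0 1) (MA 1 1) (MB 0 0) (MB 0 1) (MB 1 1) (cA 0) (cA 1) (cB 0) (cB 1) (-nu)) / ((nu*(MA 0 0)+(MB 0 0))*(nu*(MA 1 1)+(MB 1 1))-(nu*(MA 0 1)+(MB 0 1))*(nu*(MA 0 1)+(MB 0 1)))) (deriv (Fs (MA 0 0) (MA 0 1) (MA 1 1) (MB 0 0) (MB 0 1) (MB 1 1) (cA 0) (cA 1) (cB 0) (cB 1)) (-m) / ((m*(MA 0 0)+(MB 0 0))*(m*(MA 1 1)+(MB 1 1))-(m*(MA 0 1)+(MB 0 1))*(m*(MA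 0 1)+(MB 0 1)))) m := by
    intro m hm h0
    have hD := hDpos m hm.le
    have hFd := ((Fs_differentiable (MA 0 0) (MA 0 1) (MA 1 1) (MB 0 0) (MB 0 1) (MB 1 1) (cA 0) (cA 1) (cB 0) (cB 1)) (-m)).hasDerivAt
    have hneg : HasDerivAt (fun nu : ℝ => -nu) (-1 : ℝ) m := (hasDerivAt_id m).neg
    have hcomp : HasDerivAt (fun nu : ℝ => Fs (MA 0 0) (MA 0 1) (MA 1 1) (MB 0 0) (MB 0 1) (MB 1 1) (cA 0) (cA 1) (cB 0) (cB 1) (-nu))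
        (deriv (Fs (MA 0 0) (MA 0 1) (MA 1 1) (MB 0 0) (MB 0 1) (MB 1 1) (cA 0) (cA 1) (cB 0) (cB 1)) (-m) * (-1)) m := by
      have := hFd.comp m hneg
      exact this
    have hdend : Differentiable ℝ (fun nu : ℝ => ((nu*(MA 0 0)+(MB 0 0))*(nu*(MA 1 1)+(MB 1 1))-(nu*(MA 0 1)+(MB 0 1))*(nu*(MA 0 1)+(MB 0 1)))) := by fun_prop
    have hdiv := hcomp.neg.div (hdend m).hasDerivAt hD.ne'
    have hval : (-(deriv (Fs (MA 0 0) (MA 0 1) (MA 1 1) (MB 0 0) (MB 0 1) (MB 1 1) (cA 0) (cA 1) (cB 0) (cB 1)) (-m) * -1) * ((m*(MA 0 0)+(MB 0 0))*(m*(MA 1 1)+(MB 1 1))-(m*(MA 0 1)+(MB 0 1))*(m*(MA 0 1)+(MB 0 1)))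
          - -Fs (MA 0 0) (MA 0 1) (MA 1 1) (MB 0 0) (MB 0 1) (MB 1 1) (cA 0) (cA 1) (cB 0) (cB 1) (-m) * deriv (fun nu : ℝ => ((nu*(MA 0 0)+(MB 0 0))*(nu*(MA 1 1)+(MB 1 1))-(nu*(MA 0 1)+(MB 0 1))*(nu*(MA 0 1)+(MB 0 1)))) m) / ((m*(MA 0 0)+(MB 0 0))*(m*(MA 1 1)+(MB 1 1))-(m*(MA 0 1)+(MB 0 1))*(m*(MA 0 1)+(MB 0 1))) ^ 2
        = deriv (Fs (MA 0 0) (MA 0 1) (MA 1 1) (MB 0 0) (MB 0 1) (MB 1 1) (cA 0) (cA 1) (cB 0) (cB 1)) (-m) / ((m*(MA 0 0)+(MB 0 0))*(m*(MA 1 1)+(MB 1 1))-(m*(MA 0 1)+(MB 0 1))*(m*(MA 0 1)+(MB 0 1))) := by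
      rw [h0]
      simp only [mul_neg_one, neg_neg, neg_zero, zero_mul, sub_zero, pow_two]
      exact mul_div_mul_right _ _ hD.ne'
    exact hval ▸ hdiv
  constructor
  · -- touching externally → negative double root
    rintro ⟨hne, hdisj⟩
    obtain ⟨p0, hp0A, hp0B⟩ := Set.nonempty_iff_ne_empty.mpr hne
    have hp0A' : dotProduct (p0 - cA) (MA.mulVec (p0 - cA)) ≤ 1 := hp0A
    have hp0B' : dotProduct (p0 - cB) (MB.mulVec (p0 - cB)) ≤ 1 := hp0B
    have hqA1 : dotProduct (p0 - cA) (MA.mulVec (p0 - cA)) = 1 :=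
      boundary_touch hA10 hp0A' hp0B' hdisj
    have hqB1 : dotProduct (p0 - cB) (MB.mulVec (p0 - cB)) = 1 :=
      boundary_touch hB10 hp0B' hp0A' (by rw [Set.inter_comm]; exact hdisj)
    have hane : MA.mulVec (p0 - cA) ≠ 0 := by
      intro h0
      rw [h0, dotProduct_zero] at hqA1
      exact zero_ne_one hqA1
    have hbne : MB.mulVec (p0 - cB) ≠ 0 := by
      intro h0
      rw [h0, dotProduct_zero] at hqB1
      exact zero_ne_one hqB1
    have H : ∀ v : Fin 2 → ℝ, 0 ≤ dotProduct (MA.mulVec (p0 - cA)) v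
        ∨ 0 ≤ dotProduct (MB.mulVec (p0 - cB)) v := by
      intro v
      by_contra hc
      push_neg at hc
      obtain ⟨h1, h2⟩ := hc
      have hv : v ≠ 0 := by
        rintro rfl
        rw [dotProduct_zero] at h1
        exact lt_irrefl 0 h1
      have hCA : 0 < dotProduct v (MA.mulVec v) := by simpa using hMA.dotProduct_mulVec_pos hv
      have hCB : 0 < dotProduct v (MB.mulVec v) := by simpa using hMB.dotProduct_mulVec_pos hv
      have hepos : 0 < min (-(dotProduct (MA.mulVec (p0 - cA)) v) / dotProduct v (MA.mulVec v))
          (-(dotProduct (MB.mulVec (p0 - cB)) v) / dotProduct v (MB.mulVec v)) :=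
        lt_min (div_pos (by linarith) hCA) (div_pos (by linarith) hCB)
      set e := min (-(dotProduct (MA.mulVec (p0 - cA)) v) / dotProduct v (MA.mulVec v))
          (-(dotProduct (MB.mulVec (p0 - cB)) v) / dotProduct v (MB.mulVec v)) with he
      have hkA : e * dotProduct v (MA.mulVec v)
          ≤ -(dotProduct (MA.mulVec (p0 - cA)) v) :=
        (le_div_iff₀ hCA).mp (min_le_left _ _)
      have hkB : e * dotProduct v (MB.mulVec v)
          ≤ -(dotProduct (MB.mulVec (p0 - cB)) v) :=
        (le_div_iff₀ hCB).mp (min_le_right _ _)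
      have heqA : (p0 + e • v) - cA = (p0 - cA) + e • v := by
        funext i; simp; ring
      have heqB : (p0 + e • v) - cB = (p0 - cB) + e • v := by
        funext i; simp; ring
      have hA' : dotProduct ((p0 + e • v) - cA) (MA.mulVec ((p0 + e • v) - cA)) < 1 := by
        rw [heqA, quad_expand MA hA10, hqA1]
        nlinarith [hkA, hepos, h1]
      have hB' : dotProduct ((p0 + e • v) - cB) (MB.mulVec ((p0 + e • v) - cB)) < 1 := by
        rw [heqB, quad_expand MB hB10, hqB1]
        nlinarith [hkB, hepos, h2]
      have hmem : p0 + e • v ∈ openEllipse MA cA ∩ openEllipse MB cB := ⟨hA', hB'⟩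
      rw [hdisj] at hmem
      exact hmem
    obtain ⟨m, hm, hab⟩ := antiparallel hane hbne H
    -- scalar critical-point equations
    have hab0 := congrFun hab 0
    have hab1 := congrFun hab 1
    simp only [Pi.add_apply, Pi.smul_apply, smul_eq_mul, Pi.zero_apply, Matrix.mulVec,
      dotProduct, Fin.sum_univ_two, Pi.sub_apply, hA10, hB10] at hab0 hab1
    have hqA1' : ((MA 0 0)*((p0 0)-(cA 0))^2+2*(MA 0 1)*((p0 0)-(cA 0))*((p0 1)-(cA 1))+(MA 1 1)*((p0 1)-(cA 1))^2) = 1 := by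
      rw [quad_eq MA hA10] at hqA1
      linarith [hqA1]
    have hqB1' : ((MB 0 0)*((p0 0)-(cB 0))^2+2*(MB 0 1)*((p0 0)-(cB 0))*((p0 1)-(cB 1))+(MB 1 1)*((p0 1)-(cB 1))^2) = 1 := by
      rw [quad_eq MB hB10] at hqB1
      linarith [hqB1]
    have hz1 : (p0 0)*((m*(MA 0 0)+(MB 0 0))*(m*(MA 1 1)+(MB 1 1))-(m*(MA 0 1)+(MB 0 1))*(m*(MA 0 1)+(MB 0 1))) - ((m*(MA 1 1)+(MB 1 1))*(m*((MA 0 0)*(cA 0)+(MA 0 1)*(cA 1))+((MB 0 0)*(cB 0)+(MB 0 1)*(cB 1)))-(m*(MA 0 1)+(MB 0 1))*(m*((MA 0 1)*(cA 0)+(MA 1 1)*(cA 1))+((MB 0 1)*(cB 0)+(MB 1 1)*(cB 1)))) = 0 := by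
      linear_combination ((m*(MA 1 1)+(MB 1 1)))*hab0 - ((m*(MA 0 1)+(MB 0 1)))*hab1
    have hz2 : (p0 1)*((m*(MA 0 0)+(MB 0 0))*(m*(MA 1 1)+(MB 1 1))-(m*(MA 0 1)+(MB 0 1))*(m*(MA 0 1)+(MB 0 1))) - ((m*(MA 0 0)+(MB 0 0))*(m*((MA 0 1)*(cA 0)+(MA 1 1)*(cA 1))+((MB 0 1)*(cB 0)+(MB 1 1)*(cB 1)))-(m*(MA 0 1)+(MB 0 1))*(m*((MA 0 0)*(cA 0)+(MA 0 1)*(cA 1))+((MB 0 0)*(cB 0)+(MB 0 1)*(cB 1)))) = 0 := by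
      linear_combination ((m*(MA 0 0)+(MB 0 0)))*hab1 - ((m*(MA 0 1)+(MB 0 1)))*hab0
    have hsv := starVal (MA 0 0) (MA 0 1) (MA 1 1) (MB 0 0) (MB 0 1) (MB 1 1) (cA 0) (cA 1) (cB 0) (cB 1) m
      (p0 0) (p0 1) hz1 hz2
    have hW0 : Ws (MA 0 0) (MA 0 1) (MA 1 1) (MB 0 0) (MB 0 1) (MB 1 1) (cA 0) (cA 1) (cB 0) (cB 1) m = 0 := by
      linear_combination (-1 : ℝ)*hsv + (m*((m*(MA 0 0)+(MB 0 0))*(m*(MA 1 1)+(MB 1 1))-(m*(MA 0 1)+(MB 0 1))*(m*(MA 0 1)+(MB 0 1)))^2)*hqA1' + (((m*(MA 0 0)+(MB 0 0))*(m*(MA 1 1)+(MB 1 1))-(m*(MA 0 1)+(MB 0 1))*(m*(MA 0 1)+(MB 0 1)))^2)*hqB1'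
    have hD := hDpos m hm.le
    have hF0 : Fs (MA 0 0) (MA 0 1) (MA 1 1) (MB 0 0) (MB 0 1) (MB 1 1) (cA 0) (cA 1) (cB 0) (cB 1) (-m) = 0 := by
      have h1 := idI (MA 0 0) (MA 0 1) (MA 1 1) (MB 0 0) (MB 0 1) (MB 1 1) (cA 0) (cA 1) (cB 0) (cB 1) m
      rw [hW0] at h1
      have := mul_eq_zero.mp h1
      rcases this with h | h
      · linarith [h]
      · exact absurd h hD.ne'
    refine ⟨-m, by linarith, hF0, ?_⟩
    -- the double-root condition via the local maximum of φ at m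
    have hφmax : IsLocalMax (fun nu : ℝ => -(Fs (MA 0 0) (MA 0 1) (MA 1 1) (MB 0 0) (MB 0 1) (MB 1 1) (cA 0) (cA 1) (cB 0) (cB 1) (-nu)) / ((nu*(MA 0 0)+(MB 0 0))*(nu*(MA 1 1)+(MB 1 1))-(nu*(MA 0 1)+(MB 0 1))*(nu*(MA 0 1)+(MB 0 1)))) m := by
      have hφm : -(Fs (MA 0 0) (MA 0 1) (MA 1 1) (MB 0 0) (MB 0 1) (MB 1 1) (cA 0) (cA 1) (cB 0) (cB 1) (-m)) / ((m*(MA 0 0)+(MB 0 0))*(m*(MA 1 1)+(MB 1 1))-(m*(MA 0 1)+(MB 0 1))*(m*(MA 0 1)+(MB 0 1))) = 0 := by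
        rw [hF0]; simp
      have hev : ∀ᶠ nu in nhds m, 0 < nu := eventually_gt_nhds hm
      filter_upwards [hev] with nu hnu
      have h1 := hphile (p0 0) (p0 1) nu hnu
      have h2 : nu*(((MA 0 0)*((p0 0)-(cA 0))^2+2*(MA 0 1)*((p0 0)-(cA 0))*((p0 1)-(cA 1))+(MA 1 1)*((p0 1)-(cA 1))^2)-1) + (((MB 0 0)*((p0 0)-(cB 0))^2+2*(MB 0 1)*((p0 0)-(cB 0))*((p0 1)-(cB 1))+(MB 1 1)*((p0 1)-(cB 1))^2)-1) = 0 := by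
        rw [hqA1', hqB1']; ring
      show -(Fs (MA 0 0) (MA 0 1) (MA 1 1) (MB 0 0) (MB 0 1) (MB 1 1) (cA 0) (cA 1) (cB 0) (cB 1) (-nu)) / ((nu*(MA 0 0)+(MB 0 0))*(nu*(MA 1 1)+(MB 1 1))-(nu*(MA 0 1)+(MB 0 1))*(nu*(MA 0 1)+(MB 0 1))) ≤ -(Fs (MA 0 0) (MA 0 1) (MA 1 1) (MB 0 0) (MB 0 1) (MB 1 1) (cA 0) (cA 1) (cB 0) (cB 1) (-m)) / ((m*(MA 0 0)+(MB 0 0))*(m*(MA 1 1)+(MB 1 1))-(m*(MA 0 1)+(MB 0 1))*(m*(MA 0 1)+(MB 0 1)))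
      rw [hφm]
      linarith [h1, h2]
    have hφd := hder m hm hF0
    have hzero := hφmax.hasDerivAt_eq_zero hφd
    have := div_eq_zero_iff.mp hzero
    rcases this with h | h
    · exact h
    · exact absurd h (hDpos m hm.le).ne'
  · -- negative double root → touching externally
    rintro ⟨l, hl, hFl, hFl'⟩
    obtain ⟨m, hm, rfl⟩ : ∃ m : ℝ, 0 < m ∧ l = -m := ⟨-l, by linarith, by ring⟩
    have hD := hDpos m hm.le
    have hW0 : Ws (MA 0 0) (MA 0 1) (MA 1 1) (MB 0 0) (MB 0 1) (MB 1 1) (cA 0) (cA 1) (cB 0) (cB 1) m = 0 := by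
      have h1 := idI (MA 0 0) (MA 0 1) (MA 1 1) (MB 0 0) (MB 0 1) (MB 1 1) (cA 0) (cA 1) (cB 0) (cB 1) m
      rw [hFl] at h1
      linarith [h1]
    -- interiors are disjoint
    have hGnn : ∀ x y : ℝ, 0 ≤ m*(((MA 0 0)*(x-(cA 0))^2+2*(MA 0 1)*(x-(cA 0))*(y-(cA 1))+(MA 1 1)*(y-(cA 1))^2)-1) + (((MB 0 0)*(x-(cB 0))^2+2*(MB 0 1)*(x-(cB 0))*(y-(cB 1))+(MB 1 1)*(y-(cB 1))^2)-1) := by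
      intro x y
      have h2 := idII (MA 0 0) (MA 0 1) (MA 1 1) (MB 0 0) (MB 0 1) (MB 1 1) (cA 0) (cA 1) (cB 0) (cB 1) m x y
      rw [hW0, sub_zero] at h2
      have h3 := hQnn m hm.le (x*((m*(MA 0 0)+(MB 0 0))*(m*(MA 1 1)+(MB 1 1))-(m*(MA 0 1)+(MB 0 1))*(m*(MA 0 1)+(MB 0 1))) - ((m*(MA 1 1)+(MB 1 1))*(m*((MA 0 0)*(cA 0)+(MA 0 1)*(cA 1))+((MB 0 0)*(cB 0)+(MB 0 1)*(cB 1)))-(m*(MA 0 1)+(MB 0 1))*(m*((MA 0 1)*(cA 0)+(MA 1 1)*(cA 1))+((MB 0 1)*(cB 0)+(MB 1 1)*(cB 1))))) (y*((m*(MA 0 0)+(MB 0 0))*(m*(MA 1 1)+(MB 1 1))-(m*(MA 0 1)+(MB 0 1))*(m*(MA 0 1)+(MB 0 1))) - ((m*(MA 0 0)+(MB 0 0))*(m*((MA 0 1)*(cA 0)+(MA 1 1)*(cA 1))+((MB 0 1)*(cB 0)+(MB 1 1)*(cB 1)))-(m*(MA 0 1)+(MB 0 1))*(m*((MA 0 0)*(cA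 0)+(MA 0 1)*(cA 1))+((MB 0 0)*(cB 0)+(MB 0 1)*(cB 1)))))
      rw [← h2] at h3
      exact (mul_nonneg_iff_of_pos_left (pow_pos hD 2)).mp h3
    have hdisj : openEllipse MA cA ∩ openEllipse MB cB = ∅ := by
      rw [Set.eq_empty_iff_forall_notMem]
      rintro w ⟨hwA, hwB⟩
      have hwA' : dotProduct (w - cA) (MA.mulVec (w - cA)) < 1 := hwA
      have hwB' : dotProduct (w - cB) (MB.mulVec (w - cB)) < 1 := hwB
      rw [quad_eq MA hA10] at hwA'
      rw [quad_eq MB hB10] at hwB'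
      have hg := hGnn (w 0) (w 1)
      linarith [hg, hwB', mul_pos hm (by linarith [hwA'] : (0:ℝ) < 1 - ((MA 0 0)*((w 0)-(cA 0))^2+2*(MA 0 1)*((w 0)-(cA 0))*((w 1)-(cA 1))+(MA 1 1)*((w 1)-(cA 1))^2))]
    refine ⟨?_, hdisj⟩
    -- the tangent point
    have hz1 : (((m*(MA 1 1)+(MB 1 1))*(m*((MA 0 0)*(cA 0)+(MA 0 1)*(cA 1))+((MB 0 0)*(cB 0)+(MB 0 1)*(cB 1)))-(m*(MA 0 1)+(MB 0 1))*(m*((MA 0 1)*(cA 0)+(MA 1 1)*(cA 1))+((MB 0 1)*(cB 0)+(MB 1 1)*(cB 1))))/((m*(MA 0 0)+(MB 0 0))*(m*(MA 1 1)+(MB 1 1))-(m*(MA 0 1)+(MB 0 1))*(m*(MA 0 1)+(MB 0 1))))*((m*(MA 0 0)+(MB 0 0))*(m*(MA 1 1)+(MB 1 1))-(m*(MA 0 1)+(MB 0 1))*(m*(MA 0 1)+(MB 0 1))) - ((m*(MA 1 1)+(MB 1 1))*(m*((MA 0 0)*(cA 0)+(MA 0 1)*(cA 1))+((MB 0 0)*(cB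 0)+(MB 0 1)*(cB 1)))-(m*(MA 0 1)+(MB 0 1))*(m*((MA 0 1)*(cA 0)+(MA 1 1)*(cA 1))+((MB 0 1)*(cB 0)+(MB 1 1)*(cB 1)))) = 0 := by
      rw [div_mul_cancel₀ _ hD.ne']
      ring
    have hz2 : (((m*(MA 0 0)+(MB 0 0))*(m*((MA 0 1)*(cA 0)+(MA 1 1)*(cA 1))+((MB 0 1)*(cB 0)+(MB 1 1)*(cB 1)))-(m*(MA 0 1)+(MB 0 1))*(m*((MA 0 0)*(cA 0)+(MA 0 1)*(cA 1))+((MB 0 0)*(cB 0)+(MB 0 1)*(cB 1))))/((m*(MA 0 0)+(MB 0 0))*(m*(MA 1 1)+(MB 1 1))-(m*(MA 0 1)+(MB 0 1))*(m*(MA 0 1)+(MB 0 1))))*((m*(MA 0 0)+(MB 0 0))*(m*(MA 1 1)+(MB 1 1))-(m*(MA 0 1)+(MB 0 1))*(m*(MA 0 1)+(MB 0 1))) - ((m*(MA 0 0)+(MB 0 0))*(m*((MA 0 1)*(cA 0)+(MA 1 1)*(cA 1))+((MB 0 1)*(cB 0)+(MB 1 1)*(cB 1)))-(m*(MA 0 1)+(MB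 0 1))*(m*((MA 0 0)*(cA 0)+(MA 0 1)*(cA 1))+((MB 0 0)*(cB 0)+(MB 0 1)*(cB 1)))) = 0 := by
      rw [div_mul_cancel₀ _ hD.ne']
      ring
    have hsv := starVal (MA 0 0) (MA 0 1) (MA 1 1) (MB 0 0) (MB 0 1) (MB 1 1) (cA 0) (cA 1) (cB 0) (cB 1) m
      (((m*(MA 1 1)+(MB 1 1))*(m*((MA 0 0)*(cA 0)+(MA 0 1)*(cA 1))+((MB 0 0)*(cB 0)+(MB 0 1)*(cB 1)))-(m*(MA 0 1)+(MB 0 1))*(m*((MA 0 1)*(cA 0)+(MA 1 1)*(cA 1))+((MB 0 1)*(cB 0)+(MB 1 1)*(cB 1))))/((m*(MA 0 0)+(MB 0 0))*(m*(MA 1 1)+(MB 1 1))-(m*(MA 0 1)+(MB 0 1))*(m*(MA 0 1)+(MB 0 1)))) (((m*(MA 0 0)+(MB 0 0))*(m*((MA 0 1)*(cA 0)+(MA 1 1)*(cA 1))+((MB 0 1)*(cB 0)+(MB 1 1)*(cB 1)))-(m*(MA 0 1)+(MB 0 1))*(m*((MA 0 0)*(cA 0)+(MA 0 1)*(cA 1))+((MB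 0 0)*(cB 0)+(MB 0 1)*(cB 1))))/((m*(MA 0 0)+(MB 0 0))*(m*(MA 1 1)+(MB 1 1))-(m*(MA 0 1)+(MB 0 1))*(m*(MA 0 1)+(MB 0 1)))) hz1 hz2
    rw [hW0] at hsv
    have hGstar : m*(((MA 0 0)*((((m*(MA 1 1)+(MB 1 1))*(m*((MA 0 0)*(cA 0)+(MA 0 1)*(cA 1))+((MB 0 0)*(cB 0)+(MB 0 1)*(cB 1)))-(m*(MA 0 1)+(MB 0 1))*(m*((MA 0 1)*(cA 0)+(MA 1 1)*(cA 1))+((MB 0 1)*(cB 0)+(MB 1 1)*(cB 1))))/((m*(MA 0 0)+(MB 0 0))*(m*(MA 1 1)+(MB 1 1))-(m*(MA 0 1)+(MB 0 1))*(m*(MA 0 1)+(MB 0 1))))-(cA 0))^2+2*(MA 0 1)*((((m*(MA 1 1)+(MB 1 1))*(m*((MA 0 0)*(cA 0)+(MA 0 1)*(cA 1))+((MB 0 0)*(cB 0)+(MB 0 1)*(cB 1)))-(m*(MA 0 1)+(MB 0 1))*(m*((MA 0 1)*(cA 0)+(MA 1 1)*(cA 1))+((MB 0 1)*(cB 0)+(MB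 1 1)*(cB 1))))/((m*(MA 0 0)+(MB 0 0))*(m*(MA 1 1)+(MB 1 1))-(m*(MA 0 1)+(MB 0 1))*(m*(MA 0 1)+(MB 0 1))))-(cA 0))*((((m*(MA 0 0)+(MB 0 0))*(m*((MA 0 1)*(cA 0)+(MA 1 1)*(cA 1))+((MB 0 1)*(cB 0)+(MB 1 1)*(cB 1)))-(m*(MA 0 1)+(MB 0 1))*(m*((MA 0 0)*(cA 0)+(MA 0 1)*(cA 1))+((MB 0 0)*(cB 0)+(MB 0 1)*(cB 1))))/((m*(MA 0 0)+(MB 0 0))*(m*(MA 1 1)+(MB 1 1))-(m*(MA 0 1)+(MB 0 1))*(m*(MA 0 1)+(MB 0 1))))-(cA 1))+(MA 1 1)*((((m*(MA 0 0)+(MB 0 0))*(m*((MA 0 1)*(cA 0)+(MA 1 1)*(cA 1))+((MB 0 1)*(cB 0)+(MB 1 1)*(cB 1)))-(m*(MA 0 1)+(MB 0 1))*(m*((MA 0 0)*(cA 0)+(MA 0 1)*(cA 1))+((MB 0 0)*(cB 0)+(MB 0 1)*(cB 1))))/((m*(MA 0 0)+(MB 0 0))*(m*(MA 1 1)+(MB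 1 1))-(m*(MA 0 1)+(MB 0 1))*(m*(MA 0 1)+(MB 0 1))))-(cA 1))^2)-1) + (((MB 0 0)*((((m*(MA 1 1)+(MB 1 1))*(m*((MA 0 0)*(cA 0)+(MA 0 1)*(cA 1))+((MB 0 0)*(cB 0)+(MB 0 1)*(cB 1)))-(m*(MA 0 1)+(MB 0 1))*(m*((MA 0 1)*(cA 0)+(MA 1 1)*(cA 1))+((MB 0 1)*(cB 0)+(MB 1 1)*(cB 1))))/((m*(MA 0 0)+(MB 0 0))*(m*(MA 1 1)+(MB 1 1))-(m*(MA 0 1)+(MB 0 1))*(m*(MA 0 1)+(MB 0 1))))-(cB 0))^2+2*(MB 0 1)*((((m*(MA 1 1)+(MB 1 1))*(m*((MA 0 0)*(cA 0)+(MA 0 1)*(cA 1))+((MB 0 0)*(cB 0)+(MB 0 1)*(cB 1)))-(m*(MA 0 1)+(MB 0 1))*(m*((MA 0 1)*(cA 0)+(MA 1 1)*(cA 1))+((MB 0 1)*(cB 0)+(MB 1 1)*(cB 1))))/((m*(MA 0 0)+(MB 0 0))*(m*(MA 1 1)+(MB 1 1))-(m*(MA 0 1)+(MB 0 1))*(m*(MA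 0 1)+(MB 0 1))))-(cB 0))*((((m*(MA 0 0)+(MB 0 0))*(m*((MA 0 1)*(cA 0)+(MA 1 1)*(cA 1))+((MB 0 1)*(cB 0)+(MB 1 1)*(cB 1)))-(m*(MA 0 1)+(MB 0 1))*(m*((MA 0 0)*(cA 0)+(MA 0 1)*(cA 1))+((MB 0 0)*(cB 0)+(MB 0 1)*(cB 1))))/((m*(MA 0 0)+(MB 0 0))*(m*(MA 1 1)+(MB 1 1))-(m*(MA 0 1)+(MB 0 1))*(m*(MA 0 1)+(MB 0 1))))-(cB 1))+(MB 1 1)*((((m*(MA 0 0)+(MB 0 0))*(m*((MA 0 1)*(cA 0)+(MA 1 1)*(cA 1))+((MB 0 1)*(cB 0)+(MB 1 1)*(cB 1)))-(m*(MA 0 1)+(MB 0 1))*(m*((MA 0 0)*(cA 0)+(MA 0 1)*(cA 1))+((MB 0 0)*(cB 0)+(MB 0 1)*(cB 1))))/((m*(MA 0 0)+(MB 0 0))*(m*(MA 1 1)+(MB 1 1))-(m*(MA 0 1)+(MB 0 1))*(m*(MA 0 1)+(MB 0 1))))-(cB 1))^2)-1) = 0 := by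
      rcases mul_eq_zero.mp hsv with h | h
      · exact absurd h (pow_ne_zero 2 hD.ne')
      · exact h
    -- envelope argument : q_A at the tangent point equals 1
    have hF0 : Fs (MA 0 0) (MA 0 1) (MA 1 1) (MB 0 0) (MB 0 1) (MB 1 1) (cA 0) (cA 1) (cB 0) (cB 1) (-m) = 0 := hFl
    have hφm : -(Fs (MA 0 0) (MA 0 1) (MA 1 1) (MB 0 0) (MB 0 1) (MB 1 1) (cA 0) (cA 1) (cB 0) (cB 1) (-m)) / ((m*(MA 0 0)+(MB 0 0))*(m*(MA 1 1)+(MB 1 1))-(m*(MA 0 1)+(MB 0 1))*(m*(MA 0 1)+(MB 0 1))) = 0 := by rw [hF0]; simp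
    have hψmin : IsLocalMin (fun nu : ℝ => nu*(((MA 0 0)*((((m*(MA 1 1)+(MB 1 1))*(m*((MA 0 0)*(cA 0)+(MA 0 1)*(cA 1))+((MB 0 0)*(cB 0)+(MB 0 1)*(cB 1)))-(m*(MA 0 1)+(MB 0 1))*(m*((MA 0 1)*(cA 0)+(MA 1 1)*(cA 1))+((MB 0 1)*(cB 0)+(MB 1 1)*(cB 1))))/((m*(MA 0 0)+(MB 0 0))*(m*(MA 1 1)+(MB 1 1))-(m*(MA 0 1)+(MB 0 1))*(m*(MA 0 1)+(MB 0 1))))-(cA 0))^2+2*(MA 0 1)*((((m*(MA 1 1)+(MB 1 1))*(m*((MA 0 0)*(cA 0)+(MA 0 1)*(cA 1))+((MB 0 0)*(cB 0)+(MB 0 1)*(cB 1)))-(m*(MA 0 1)+(MB 0 1))*(m*((MA 0 1)*(cA 0)+(MA 1 1)*(cA 1))+((MB 0 1)*(cB 0)+(MB 1 1)*(cB 1))))/((m*(MA 0 0)+(MB 0 0))*(m*(MA 1 1)+(MB 1 1))-(m*(MA 0 1)+(MB 0 1))*(m*(MA 0 1)+(MB 0 1))))-(cA 0))*((((m*(MA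 0 0)+(MB 0 0))*(m*((MA 0 1)*(cA 0)+(MA 1 1)*(cA 1))+((MB 0 1)*(cB 0)+(MB 1 1)*(cB 1)))-(m*(MA 0 1)+(MB 0 1))*(m*((MA 0 0)*(cA 0)+(MA 0 1)*(cA 1))+((MB 0 0)*(cB 0)+(MB 0 1)*(cB 1))))/((m*(MA 0 0)+(MB 0 0))*(m*(MA 1 1)+(MB 1 1))-(m*(MA 0 1)+(MB 0 1))*(m*(MA 0 1)+(MB 0 1))))-(cA 1))+(MA 1 1)*((((m*(MA 0 0)+(MB 0 0))*(m*((MA 0 1)*(cA 0)+(MA 1 1)*(cA 1))+((MB 0 1)*(cB 0)+(MB 1 1)*(cB 1)))-(m*(MA 0 1)+(MB 0 1))*(m*((MA 0 0)*(cA 0)+(MA 0 1)*(cA 1))+((MB 0 0)*(cB 0)+(MB 0 1)*(cB 1))))/((m*(MA 0 0)+(MB 0 0))*(m*(MA 1 1)+(MB 1 1))-(m*(MA 0 1)+(MB 0 1))*(m*(MA 0 1)+(MB 0 1))))-(cA 1))^2)-1) + (((MB 0 0)*((((m*(MA 1 1)+(MB 1 1))*(m*((MA 0 0)*(cA 0)+(MA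 0 1)*(cA 1))+((MB 0 0)*(cB 0)+(MB 0 1)*(cB 1)))-(m*(MA 0 1)+(MB 0 1))*(m*((MA 0 1)*(cA 0)+(MA 1 1)*(cA 1))+((MB 0 1)*(cB 0)+(MB 1 1)*(cB 1))))/((m*(MA 0 0)+(MB 0 0))*(m*(MA 1 1)+(MB 1 1))-(m*(MA 0 1)+(MB 0 1))*(m*(MA 0 1)+(MB 0 1))))-(cB 0))^2+2*(MB 0 1)*((((m*(MA 1 1)+(MB 1 1))*(m*((MA 0 0)*(cA 0)+(MA 0 1)*(cA 1))+((MB 0 0)*(cB 0)+(MB 0 1)*(cB 1)))-(m*(MA 0 1)+(MB 0 1))*(m*((MA 0 1)*(cA 0)+(MA 1 1)*(cA 1))+((MB 0 1)*(cB 0)+(MB 1 1)*(cB 1))))/((m*(MA 0 0)+(MB 0 0))*(m*(MA 1 1)+(MB 1 1))-(m*(MA 0 1)+(MB 0 1))*(m*(MA 0 1)+(MB 0 1))))-(cB 0))*((((m*(MA 0 0)+(MB 0 0))*(m*((MA 0 1)*(cA 0)+(MA 1 1)*(cA 1))+((MB 0 1)*(cB 0)+(MB 1 1)*(cB 1)))-(m*(MA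 0 1)+(MB 0 1))*(m*((MA 0 0)*(cA 0)+(MA 0 1)*(cA 1))+((MB 0 0)*(cB 0)+(MB 0 1)*(cB 1))))/((m*(MA 0 0)+(MB 0 0))*(m*(MA 1 1)+(MB 1 1))-(m*(MA 0 1)+(MB 0 1))*(m*(MA 0 1)+(MB 0 1))))-(cB 1))+(MB 1 1)*((((m*(MA 0 0)+(MB 0 0))*(m*((MA 0 1)*(cA 0)+(MA 1 1)*(cA 1))+((MB 0 1)*(cB 0)+(MB 1 1)*(cB 1)))-(m*(MA 0 1)+(MB 0 1))*(m*((MA 0 0)*(cA 0)+(MA 0 1)*(cA 1))+((MB 0 0)*(cB 0)+(MB 0 1)*(cB 1))))/((m*(MA 0 0)+(MB 0 0))*(m*(MA 1 1)+(MB 1 1))-(m*(MA 0 1)+(MB 0 1))*(m*(MA 0 1)+(MB 0 1))))-(cB 1))^2)-1)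
        - (-(Fs (MA 0 0) (MA 0 1) (MA 1 1) (MB 0 0) (MB 0 1) (MB 1 1) (cA 0) (cA 1) (cB 0) (cB 1) (-nu)) / ((nu*(MA 0 0)+(MB 0 0))*(nu*(MA 1 1)+(MB 1 1))-(nu*(MA 0 1)+(MB 0 1))*(nu*(MA 0 1)+(MB 0 1))))) m := by
      have hev : ∀ᶠ nu in nhds m, 0 < nu := eventually_gt_nhds hm
      filter_upwards [hev] with nu hnu
      have h1 := hphile (((m*(MA 1 1)+(MB 1 1))*(m*((MA 0 0)*(cA 0)+(MA 0 1)*(cA 1))+((MB 0 0)*(cB 0)+(MB 0 1)*(cB 1)))-(m*(MA 0 1)+(MB 0 1))*(m*((MA 0 1)*(cA 0)+(MA 1 1)*(cA 1))+((MB 0 1)*(cB 0)+(MB 1 1)*(cB 1))))/((m*(MA 0 0)+(MB 0 0))*(m*(MA 1 1)+(MB 1 1))-(m*(MA 0 1)+(MB 0 1))*(m*(MA 0 1)+(MB 0 1)))) (((m*(MA 0 0)+(MB 0 0))*(m*((MA 0 1)*(cA 0)+(MA 1 1)*(cA 1))+((MB 0 1)*(cB 0)+(MB 1 1)*(cB 1)))-(m*(MA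 0 1)+(MB 0 1))*(m*((MA 0 0)*(cA 0)+(MA 0 1)*(cA 1))+((MB 0 0)*(cB 0)+(MB 0 1)*(cB 1))))/((m*(MA 0 0)+(MB 0 0))*(m*(MA 1 1)+(MB 1 1))-(m*(MA 0 1)+(MB 0 1))*(m*(MA 0 1)+(MB 0 1)))) nu hnu
      show m*(((MA 0 0)*((((m*(MA 1 1)+(MB 1 1))*(m*((MA 0 0)*(cA 0)+(MA 0 1)*(cA 1))+((MB 0 0)*(cB 0)+(MB 0 1)*(cB 1)))-(m*(MA 0 1)+(MB 0 1))*(m*((MA 0 1)*(cA 0)+(MA 1 1)*(cA 1))+((MB 0 1)*(cB 0)+(MB 1 1)*(cB 1))))/((m*(MA 0 0)+(MB 0 0))*(m*(MA 1 1)+(MB 1 1))-(m*(MA 0 1)+(MB 0 1))*(m*(MA 0 1)+(MB 0 1))))-(cA 0))^2+2*(MA 0 1)*((((m*(MA 1 1)+(MB 1 1))*(m*((MA 0 0)*(cA 0)+(MA 0 1)*(cA 1))+((MB 0 0)*(cB 0)+(MB 0 1)*(cB 1)))-(m*(MA 0 1)+(MB 0 1))*(m*((MA 0 1)*(cA 0)+(MA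 1 1)*(cA 1))+((MB 0 1)*(cB 0)+(MB 1 1)*(cB 1))))/((m*(MA 0 0)+(MB 0 0))*(m*(MA 1 1)+(MB 1 1))-(m*(MA 0 1)+(MB 0 1))*(m*(MA 0 1)+(MB 0 1))))-(cA 0))*((((m*(MA 0 0)+(MB 0 0))*(m*((MA 0 1)*(cA 0)+(MA 1 1)*(cA 1))+((MB 0 1)*(cB 0)+(MB 1 1)*(cB 1)))-(m*(MA 0 1)+(MB 0 1))*(m*((MA 0 0)*(cA 0)+(MA 0 1)*(cA 1))+((MB 0 0)*(cB 0)+(MB 0 1)*(cB 1))))/((m*(MA 0 0)+(MB 0 0))*(m*(MA 1 1)+(MB 1 1))-(m*(MA 0 1)+(MB 0 1))*(m*(MA 0 1)+(MB 0 1))))-(cA 1))+(MA 1 1)*((((m*(MA 0 0)+(MB 0 0))*(m*((MA 0 1)*(cA 0)+(MA 1 1)*(cA 1))+((MB 0 1)*(cB 0)+(MB 1 1)*(cB 1)))-(m*(MA 0 1)+(MB 0 1))*(m*((MA 0 0)*(cA 0)+(MA 0 1)*(cA 1))+((MB 0 0)*(cB 0)+(MB 0 1)*(cB 1))))/((m*(MA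 0 0)+(MB 0 0))*(m*(MA 1 1)+(MB 1 1))-(m*(MA 0 1)+(MB 0 1))*(m*(MA 0 1)+(MB 0 1))))-(cA 1))^2)-1) + (((MB 0 0)*((((m*(MA 1 1)+(MB 1 1))*(m*((MA 0 0)*(cA 0)+(MA 0 1)*(cA 1))+((MB 0 0)*(cB 0)+(MB 0 1)*(cB 1)))-(m*(MA 0 1)+(MB 0 1))*(m*((MA 0 1)*(cA 0)+(MA 1 1)*(cA 1))+((MB 0 1)*(cB 0)+(MB 1 1)*(cB 1))))/((m*(MA 0 0)+(MB 0 0))*(m*(MA 1 1)+(MB 1 1))-(m*(MA 0 1)+(MB 0 1))*(m*(MA 0 1)+(MB 0 1))))-(cB 0))^2+2*(MB 0 1)*((((m*(MA 1 1)+(MB 1 1))*(m*((MA 0 0)*(cA 0)+(MA 0 1)*(cA 1))+((MB 0 0)*(cB 0)+(MB 0 1)*(cB 1)))-(m*(MA 0 1)+(MB 0 1))*(m*((MA 0 1)*(cA 0)+(MA 1 1)*(cA 1))+((MB 0 1)*(cB 0)+(MB 1 1)*(cB 1))))/((m*(MA 0 0)+(MB 0 0))*(m*(MA 1 1)+(MB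 1 1))-(m*(MA 0 1)+(MB 0 1))*(m*(MA 0 1)+(MB 0 1))))-(cB 0))*((((m*(MA 0 0)+(MB 0 0))*(m*((MA 0 1)*(cA 0)+(MA 1 1)*(cA 1))+((MB 0 1)*(cB 0)+(MB 1 1)*(cB 1)))-(m*(MA 0 1)+(MB 0 1))*(m*((MA 0 0)*(cA 0)+(MA 0 1)*(cA 1))+((MB 0 0)*(cB 0)+(MB 0 1)*(cB 1))))/((m*(MA 0 0)+(MB 0 0))*(m*(MA 1 1)+(MB 1 1))-(m*(MA 0 1)+(MB 0 1))*(m*(MA 0 1)+(MB 0 1))))-(cB 1))+(MB 1 1)*((((m*(MA 0 0)+(MB 0 0))*(m*((MA 0 1)*(cA 0)+(MA 1 1)*(cA 1))+((MB 0 1)*(cB 0)+(MB 1 1)*(cB 1)))-(m*(MA 0 1)+(MB 0 1))*(m*((MA 0 0)*(cA 0)+(MA 0 1)*(cA 1))+((MB 0 0)*(cB 0)+(MB 0 1)*(cB 1))))/((m*(MA 0 0)+(MB 0 0))*(m*(MA 1 1)+(MB 1 1))-(m*(MA 0 1)+(MB 0 1))*(m*(MA 0 1)+(MB 0 1))))-(cB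 1))^2)-1) - (-(Fs (MA 0 0) (MA 0 1) (MA 1 1) (MB 0 0) (MB 0 1) (MB 1 1) (cA 0) (cA 1) (cB 0) (cB 1) (-m)) / ((m*(MA 0 0)+(MB 0 0))*(m*(MA 1 1)+(MB 1 1))-(m*(MA 0 1)+(MB 0 1))*(m*(MA 0 1)+(MB 0 1))))
          ≤ nu*(((MA 0 0)*((((m*(MA 1 1)+(MB 1 1))*(m*((MA 0 0)*(cA 0)+(MA 0 1)*(cA 1))+((MB 0 0)*(cB 0)+(MB 0 1)*(cB 1)))-(m*(MA 0 1)+(MB 0 1))*(m*((MA 0 1)*(cA 0)+(MA 1 1)*(cA 1))+((MB 0 1)*(cB 0)+(MB 1 1)*(cB 1))))/((m*(MA 0 0)+(MB 0 0))*(m*(MA 1 1)+(MB 1 1))-(m*(MA 0 1)+(MB 0 1))*(m*(MA 0 1)+(MB 0 1))))-(cA 0))^2+2*(MA 0 1)*((((m*(MA 1 1)+(MB 1 1))*(m*((MA 0 0)*(cA 0)+(MA 0 1)*(cA 1))+((MB 0 0)*(cB 0)+(MB 0 1)*(cB 1)))-(m*(MA 0 1)+(MB 0 1))*(m*((MA 0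 1)*(cA 0)+(MA 1 1)*(cA 1))+((MB 0 1)*(cB 0)+(MB 1 1)*(cB 1))))/((m*(MA 0 0)+(MB 0 0))*(m*(MA 1 1)+(MB 1 1))-(m*(MA 0 1)+(MB 0 1))*(m*(MA 0 1)+(MB 0 1))))-(cA 0))*((((m*(MA 0 0)+(MB 0 0))*(m*((MA 0 1)*(cA 0)+(MA 1 1)*(cA 1))+((MB 0 1)*(cB 0)+(MB 1 1)*(cB 1)))-(m*(MA 0 1)+(MB 0 1))*(m*((MA 0 0)*(cA 0)+(MA 0 1)*(cA 1))+((MB 0 0)*(cB 0)+(MB 0 1)*(cB 1))))/((m*(MA 0 0)+(MB 0 0))*(m*(MA 1 1)+(MB 1 1))-(m*(MA 0 1)+(MB 0 1))*(m*(MA 0 1)+(MB 0 1))))-(cA 1))+(MA 1 1)*((((m*(MA 0 0)+(MB 0 0))*(m*((MA 0 1)*(cA 0)+(MA 1 1)*(cA 1))+((MB 0 1)*(cB 0)+(MB 1 1)*(cB 1)))-(m*(MA 0 1)+(MB 0 1))*(m*((MA 0 0)*(cA 0)+(MA 0 1)*(cA 1))+((MB 0 0)*(cB 0)+(MB 0 1)*(cB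 1))))/((m*(MA 0 0)+(MB 0 0))*(m*(MA 1 1)+(MB 1 1))-(m*(MA 0 1)+(MB 0 1))*(m*(MA 0 1)+(MB 0 1))))-(cA 1))^2)-1) + (((MB 0 0)*((((m*(MA 1 1)+(MB 1 1))*(m*((MA 0 0)*(cA 0)+(MA 0 1)*(cA 1))+((MB 0 0)*(cB 0)+(MB 0 1)*(cB 1)))-(m*(MA 0 1)+(MB 0 1))*(m*((MA 0 1)*(cA 0)+(MA 1 1)*(cA 1))+((MB 0 1)*(cB 0)+(MB 1 1)*(cB 1))))/((m*(MA 0 0)+(MB 0 0))*(m*(MA 1 1)+(MB 1 1))-(m*(MA 0 1)+(MB 0 1))*(m*(MA 0 1)+(MB 0 1))))-(cB 0))^2+2*(MB 0 1)*((((m*(MA 1 1)+(MB 1 1))*(m*((MA 0 0)*(cA 0)+(MA 0 1)*(cA 1))+((MB 0 0)*(cB 0)+(MB 0 1)*(cB 1)))-(m*(MA 0 1)+(MB 0 1))*(m*((MA 0 1)*(cA 0)+(MA 1 1)*(cA 1))+((MB 0 1)*(cB 0)+(MB 1 1)*(cB 1))))/((m*(MA 0 0)+(MB 0 0))*(m*(MA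 1 1)+(MB 1 1))-(m*(MA 0 1)+(MB 0 1))*(m*(MA 0 1)+(MB 0 1))))-(cB 0))*((((m*(MA 0 0)+(MB 0 0))*(m*((MA 0 1)*(cA 0)+(MA 1 1)*(cA 1))+((MB 0 1)*(cB 0)+(MB 1 1)*(cB 1)))-(m*(MA 0 1)+(MB 0 1))*(m*((MA 0 0)*(cA 0)+(MA 0 1)*(cA 1))+((MB 0 0)*(cB 0)+(MB 0 1)*(cB 1))))/((m*(MA 0 0)+(MB 0 0))*(m*(MA 1 1)+(MB 1 1))-(m*(MA 0 1)+(MB 0 1))*(m*(MA 0 1)+(MB 0 1))))-(cB 1))+(MB 1 1)*((((m*(MA 0 0)+(MB 0 0))*(m*((MA 0 1)*(cA 0)+(MA 1 1)*(cA 1))+((MB 0 1)*(cB 0)+(MB 1 1)*(cB 1)))-(m*(MA 0 1)+(MB 0 1))*(m*((MA 0 0)*(cA 0)+(MA 0 1)*(cA 1))+((MB 0 0)*(cB 0)+(MB 0 1)*(cB 1))))/((m*(MA 0 0)+(MB 0 0))*(m*(MA 1 1)+(MB 1 1))-(m*(MA 0 1)+(MB 0 1))*(m*(MA 0 1)+(MB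 0 1))))-(cB 1))^2)-1) - (-(Fs (MA 0 0) (MA 0 1) (MA 1 1) (MB 0 0) (MB 0 1) (MB 1 1) (cA 0) (cA 1) (cB 0) (cB 1) (-nu)) / ((nu*(MA 0 0)+(MB 0 0))*(nu*(MA 1 1)+(MB 1 1))-(nu*(MA 0 1)+(MB 0 1))*(nu*(MA 0 1)+(MB 0 1))))
      rw [hGstar, hφm]
      linarith [h1]
    have hφd := hder m hm hF0
    rw [hFl', zero_div] at hφd
    have hψd : HasDerivAt (fun nu : ℝ => nu*(((MA 0 0)*((((m*(MA 1 1)+(MB 1 1))*(m*((MA 0 0)*(cA 0)+(MA 0 1)*(cA 1))+((MB 0 0)*(cB 0)+(MB 0 1)*(cB 1)))-(m*(MA 0 1)+(MB 0 1))*(m*((MA 0 1)*(cA 0)+(MA 1 1)*(cA 1))+((MB 0 1)*(cB 0)+(MB 1 1)*(cB 1))))/((m*(MA 0 0)+(MB 0 0))*(m*(MA 1 1)+(MB 1 1))-(m*(MA 0 1)+(MB 0 1))*(m*(MA 0 1)+(MB 0 1))))-(cA 0))^2+2*(MA 0 1)*((((m*(MA 1 1)+(MB 1 1))*(m*((MA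 0 0)*(cA 0)+(MA 0 1)*(cA 1))+((MB 0 0)*(cB 0)+(MB 0 1)*(cB 1)))-(m*(MA 0 1)+(MB 0 1))*(m*((MA 0 1)*(cA 0)+(MA 1 1)*(cA 1))+((MB 0 1)*(cB 0)+(MB 1 1)*(cB 1))))/((m*(MA 0 0)+(MB 0 0))*(m*(MA 1 1)+(MB 1 1))-(m*(MA 0 1)+(MB 0 1))*(m*(MA 0 1)+(MB 0 1))))-(cA 0))*((((m*(MA 0 0)+(MB 0 0))*(m*((MA 0 1)*(cA 0)+(MA 1 1)*(cA 1))+((MB 0 1)*(cB 0)+(MB 1 1)*(cB 1)))-(m*(MA 0 1)+(MB 0 1))*(m*((MA 0 0)*(cA 0)+(MA 0 1)*(cA 1))+((MB 0 0)*(cB 0)+(MB 0 1)*(cB 1))))/((m*(MA 0 0)+(MB 0 0))*(m*(MA 1 1)+(MB 1 1))-(m*(MA 0 1)+(MB 0 1))*(m*(MA 0 1)+(MB 0 1))))-(cA 1))+(MA 1 1)*((((m*(MA 0 0)+(MB 0 0))*(m*((MA 0 1)*(cA 0)+(MA 1 1)*(cA 1))+((MB 0 1)*(cB 0)+(MB 1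 1)*(cB 1)))-(m*(MA 0 1)+(MB 0 1))*(m*((MA 0 0)*(cA 0)+(MA 0 1)*(cA 1))+((MB 0 0)*(cB 0)+(MB 0 1)*(cB 1))))/((m*(MA 0 0)+(MB 0 0))*(m*(MA 1 1)+(MB 1 1))-(m*(MA 0 1)+(MB 0 1))*(m*(MA 0 1)+(MB 0 1))))-(cA 1))^2)-1) + (((MB 0 0)*((((m*(MA 1 1)+(MB 1 1))*(m*((MA 0 0)*(cA 0)+(MA 0 1)*(cA 1))+((MB 0 0)*(cB 0)+(MB 0 1)*(cB 1)))-(m*(MA 0 1)+(MB 0 1))*(m*((MA 0 1)*(cA 0)+(MA 1 1)*(cA 1))+((MB 0 1)*(cB 0)+(MB 1 1)*(cB 1))))/((m*(MA 0 0)+(MB 0 0))*(m*(MA 1 1)+(MB 1 1))-(m*(MA 0 1)+(MB 0 1))*(m*(MA 0 1)+(MB 0 1))))-(cB 0))^2+2*(MB 0 1)*((((m*(MA 1 1)+(MB 1 1))*(m*((MA 0 0)*(cA 0)+(MA 0 1)*(cA 1))+((MB 0 0)*(cB 0)+(MB 0 1)*(cB 1)))-(m*(MA 0 1)+(MB 0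 1))*(m*((MA 0 1)*(cA 0)+(MA 1 1)*(cA 1))+((MB 0 1)*(cB 0)+(MB 1 1)*(cB 1))))/((m*(MA 0 0)+(MB 0 0))*(m*(MA 1 1)+(MB 1 1))-(m*(MA 0 1)+(MB 0 1))*(m*(MA 0 1)+(MB 0 1))))-(cB 0))*((((m*(MA 0 0)+(MB 0 0))*(m*((MA 0 1)*(cA 0)+(MA 1 1)*(cA 1))+((MB 0 1)*(cB 0)+(MB 1 1)*(cB 1)))-(m*(MA 0 1)+(MB 0 1))*(m*((MA 0 0)*(cA 0)+(MA 0 1)*(cA 1))+((MB 0 0)*(cB 0)+(MB 0 1)*(cB 1))))/((m*(MA 0 0)+(MB 0 0))*(m*(MA 1 1)+(MB 1 1))-(m*(MA 0 1)+(MB 0 1))*(m*(MA 0 1)+(MB 0 1))))-(cB 1))+(MB 1 1)*((((m*(MA 0 0)+(MB 0 0))*(m*((MA 0 1)*(cA 0)+(MA 1 1)*(cA 1))+((MB 0 1)*(cB 0)+(MB 1 1)*(cB 1)))-(m*(MA 0 1)+(MB 0 1))*(m*((MA 0 0)*(cA 0)+(MA 0 1)*(cA 1))+((MB 0 0)*(cB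 0)+(MB 0 1)*(cB 1))))/((m*(MA 0 0)+(MB 0 0))*(m*(MA 1 1)+(MB 1 1))-(m*(MA 0 1)+(MB 0 1))*(m*(MA 0 1)+(MB 0 1))))-(cB 1))^2)-1)
        - (-(Fs (MA 0 0) (MA 0 1) (MA 1 1) (MB 0 0) (MB 0 1) (MB 1 1) (cA 0) (cA 1) (cB 0) (cB 1) (-nu)) / ((nu*(MA 0 0)+(MB 0 0))*(nu*(MA 1 1)+(MB 1 1))-(nu*(MA 0 1)+(MB 0 1))*(nu*(MA 0 1)+(MB 0 1))))) ((((MA 0 0)*((((m*(MA 1 1)+(MB 1 1))*(m*((MA 0 0)*(cA 0)+(MA 0 1)*(cA 1))+((MB 0 0)*(cB 0)+(MB 0 1)*(cB 1)))-(m*(MA 0 1)+(MB 0 1))*(m*((MA 0 1)*(cA 0)+(MA 1 1)*(cA 1))+((MB 0 1)*(cB 0)+(MB 1 1)*(cB 1))))/((m*(MA 0 0)+(MB 0 0))*(m*(MA 1 1)+(MB 1 1))-(m*(MA 0 1)+(MB 0 1))*(m*(MA 0 1)+(MB 0 1))))-(cA 0))^2+2*(MA 0 1)*((((m*(MA 1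 1)+(MB 1 1))*(m*((MA 0 0)*(cA 0)+(MA 0 1)*(cA 1))+((MB 0 0)*(cB 0)+(MB 0 1)*(cB 1)))-(m*(MA 0 1)+(MB 0 1))*(m*((MA 0 1)*(cA 0)+(MA 1 1)*(cA 1))+((MB 0 1)*(cB 0)+(MB 1 1)*(cB 1))))/((m*(MA 0 0)+(MB 0 0))*(m*(MA 1 1)+(MB 1 1))-(m*(MA 0 1)+(MB 0 1))*(m*(MA 0 1)+(MB 0 1))))-(cA 0))*((((m*(MA 0 0)+(MB 0 0))*(m*((MA 0 1)*(cA 0)+(MA 1 1)*(cA 1))+((MB 0 1)*(cB 0)+(MB 1 1)*(cB 1)))-(m*(MA 0 1)+(MB 0 1))*(m*((MA 0 0)*(cA 0)+(MA 0 1)*(cA 1))+((MB 0 0)*(cB 0)+(MB 0 1)*(cB 1))))/((m*(MA 0 0)+(MB 0 0))*(m*(MA 1 1)+(MB 1 1))-(m*(MA 0 1)+(MB 0 1))*(m*(MA 0 1)+(MB 0 1))))-(cA 1))+(MA 1 1)*((((m*(MA 0 0)+(MB 0 0))*(m*((MA 0 1)*(cA 0)+(MA 1 1)*(cA 1))+((MB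 0 1)*(cB 0)+(MB 1 1)*(cB 1)))-(m*(MA 0 1)+(MB 0 1))*(m*((MA 0 0)*(cA 0)+(MA 0 1)*(cA 1))+((MB 0 0)*(cB 0)+(MB 0 1)*(cB 1))))/((m*(MA 0 0)+(MB 0 0))*(m*(MA 1 1)+(MB 1 1))-(m*(MA 0 1)+(MB 0 1))*(m*(MA 0 1)+(MB 0 1))))-(cA 1))^2)-1) - 0) m :=
      ((hasDerivAt_mul_const _).add_const _).sub hφd
    have hQAs : ((MA 0 0)*((((m*(MA 1 1)+(MB 1 1))*(m*((MA 0 0)*(cA 0)+(MA 0 1)*(cA 1))+((MB 0 0)*(cB 0)+(MB 0 1)*(cB 1)))-(m*(MA 0 1)+(MB 0 1))*(m*((MA 0 1)*(cA 0)+(MA 1 1)*(cA 1))+((MB 0 1)*(cB 0)+(MB 1 1)*(cB 1))))/((m*(MA 0 0)+(MB 0 0))*(m*(MA 1 1)+(MB 1 1))-(m*(MA 0 1)+(MB 0 1))*(m*(MA 0 1)+(MB 0 1))))-(cA 0))^2+2*(MA 0 1)*((((m*(MA 1 1)+(MB 1 1))*(m*((MA 0 0)*(cA 0)+(MA 0 1)*(cA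 1))+((MB 0 0)*(cB 0)+(MB 0 1)*(cB 1)))-(m*(MA 0 1)+(MB 0 1))*(m*((MA 0 1)*(cA 0)+(MA 1 1)*(cA 1))+((MB 0 1)*(cB 0)+(MB 1 1)*(cB 1))))/((m*(MA 0 0)+(MB 0 0))*(m*(MA 1 1)+(MB 1 1))-(m*(MA 0 1)+(MB 0 1))*(m*(MA 0 1)+(MB 0 1))))-(cA 0))*((((m*(MA 0 0)+(MB 0 0))*(m*((MA 0 1)*(cA 0)+(MA 1 1)*(cA 1))+((MB 0 1)*(cB 0)+(MB 1 1)*(cB 1)))-(m*(MA 0 1)+(MB 0 1))*(m*((MA 0 0)*(cA 0)+(MA 0 1)*(cA 1))+((MB 0 0)*(cB 0)+(MB 0 1)*(cB 1))))/((m*(MA 0 0)+(MB 0 0))*(m*(MA 1 1)+(MB 1 1))-(m*(MA 0 1)+(MB 0 1))*(m*(MA 0 1)+(MB 0 1))))-(cA 1))+(MA 1 1)*((((m*(MA 0 0)+(MB 0 0))*(m*((MA 0 1)*(cA 0)+(MA 1 1)*(cA 1))+((MB 0 1)*(cB 0)+(MB 1 1)*(cB 1)))-(m*(MA 0 1)+(MB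 0 1))*(m*((MA 0 0)*(cA 0)+(MA 0 1)*(cA 1))+((MB 0 0)*(cB 0)+(MB 0 1)*(cB 1))))/((m*(MA 0 0)+(MB 0 0))*(m*(MA 1 1)+(MB 1 1))-(m*(MA 0 1)+(MB 0 1))*(m*(MA 0 1)+(MB 0 1))))-(cA 1))^2) = 1 := by
      have := hψmin.hasDerivAt_eq_zero hψd
      linarith [this]
    have hQBs : ((MB 0 0)*((((m*(MA 1 1)+(MB 1 1))*(m*((MA 0 0)*(cA 0)+(MA 0 1)*(cA 1))+((MB 0 0)*(cB 0)+(MB 0 1)*(cB 1)))-(m*(MA 0 1)+(MB 0 1))*(m*((MA 0 1)*(cA 0)+(MA 1 1)*(cA 1))+((MB 0 1)*(cB 0)+(MB 1 1)*(cB 1))))/((m*(MA 0 0)+(MB 0 0))*(m*(MA 1 1)+(MB 1 1))-(m*(MA 0 1)+(MB 0 1))*(m*(MA 0 1)+(MB 0 1))))-(cB 0))^2+2*(MB 0 1)*((((m*(MA 1 1)+(MB 1 1))*(m*((MA 0 0)*(cA 0)+(MA 0 1)*(cA 1))+((MB 0 0)*(cB 0)+(MB 0 1)*(cB 1)))-(m*(MA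 0 1)+(MB 0 1))*(m*((MA 0 1)*(cA 0)+(MA 1 1)*(cA 1))+((MB 0 1)*(cB 0)+(MB 1 1)*(cB 1))))/((m*(MA 0 0)+(MB 0 0))*(m*(MA 1 1)+(MB 1 1))-(m*(MA 0 1)+(MB 0 1))*(m*(MA 0 1)+(MB 0 1))))-(cB 0))*((((m*(MA 0 0)+(MB 0 0))*(m*((MA 0 1)*(cA 0)+(MA 1 1)*(cA 1))+((MB 0 1)*(cB 0)+(MB 1 1)*(cB 1)))-(m*(MA 0 1)+(MB 0 1))*(m*((MA 0 0)*(cA 0)+(MA 0 1)*(cA 1))+((MB 0 0)*(cB 0)+(MB 0 1)*(cB 1))))/((m*(MA 0 0)+(MB 0 0))*(m*(MA 1 1)+(MB 1 1))-(m*(MA 0 1)+(MB 0 1))*(m*(MA 0 1)+(MB 0 1))))-(cB 1))+(MB 1 1)*((((m*(MA 0 0)+(MB 0 0))*(m*((MA 0 1)*(cA 0)+(MA 1 1)*(cA 1))+((MB 0 1)*(cB 0)+(MB 1 1)*(cB 1)))-(m*(MA 0 1)+(MB 0 1))*(m*((MA 0 0)*(cA 0)+(MA 0 1)*(cA 1))+((MB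 0 0)*(cB 0)+(MB 0 1)*(cB 1))))/((m*(MA 0 0)+(MB 0 0))*(m*(MA 1 1)+(MB 1 1))-(m*(MA 0 1)+(MB 0 1))*(m*(MA 0 1)+(MB 0 1))))-(cB 1))^2) = 1 := by
      have h5 : m*(((MA 0 0)*((((m*(MA 1 1)+(MB 1 1))*(m*((MA 0 0)*(cA 0)+(MA 0 1)*(cA 1))+((MB 0 0)*(cB 0)+(MB 0 1)*(cB 1)))-(m*(MA 0 1)+(MB 0 1))*(m*((MA 0 1)*(cA 0)+(MA 1 1)*(cA 1))+((MB 0 1)*(cB 0)+(MB 1 1)*(cB 1))))/((m*(MA 0 0)+(MB 0 0))*(m*(MA 1 1)+(MB 1 1))-(m*(MA 0 1)+(MB 0 1))*(m*(MA 0 1)+(MB 0 1))))-(cA 0))^2+2*(MA 0 1)*((((m*(MA 1 1)+(MB 1 1))*(m*((MA 0 0)*(cA 0)+(MA 0 1)*(cA 1))+((MB 0 0)*(cB 0)+(MB 0 1)*(cB 1)))-(m*(MA 0 1)+(MB 0 1))*(m*((MA 0 1)*(cA 0)+(MA 1 1)*(cA 1))+((MB 0 1)*(cB 0)+(MB 1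 1)*(cB 1))))/((m*(MA 0 0)+(MB 0 0))*(m*(MA 1 1)+(MB 1 1))-(m*(MA 0 1)+(MB 0 1))*(m*(MA 0 1)+(MB 0 1))))-(cA 0))*((((m*(MA 0 0)+(MB 0 0))*(m*((MA 0 1)*(cA 0)+(MA 1 1)*(cA 1))+((MB 0 1)*(cB 0)+(MB 1 1)*(cB 1)))-(m*(MA 0 1)+(MB 0 1))*(m*((MA 0 0)*(cA 0)+(MA 0 1)*(cA 1))+((MB 0 0)*(cB 0)+(MB 0 1)*(cB 1))))/((m*(MA 0 0)+(MB 0 0))*(m*(MA 1 1)+(MB 1 1))-(m*(MA 0 1)+(MB 0 1))*(m*(MA 0 1)+(MB 0 1))))-(cA 1))+(MA 1 1)*((((m*(MA 0 0)+(MB 0 0))*(m*((MA 0 1)*(cA 0)+(MA 1 1)*(cA 1))+((MB 0 1)*(cB 0)+(MB 1 1)*(cB 1)))-(m*(MA 0 1)+(MB 0 1))*(m*((MA 0 0)*(cA 0)+(MA 0 1)*(cA 1))+((MB 0 0)*(cB 0)+(MB 0 1)*(cB 1))))/((m*(MA 0 0)+(MB 0 0))*(m*(MA 1 1)+(MB 1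 1))-(m*(MA 0 1)+(MB 0 1))*(m*(MA 0 1)+(MB 0 1))))-(cA 1))^2)-1) = 0 := by rw [hQAs]; ring
      linarith [hGstar, h5]
    rw [← Set.nonempty_iff_ne_empty]
    refine ⟨![(((m*(MA 1 1)+(MB 1 1))*(m*((MA 0 0)*(cA 0)+(MA 0 1)*(cA 1))+((MB 0 0)*(cB 0)+(MB 0 1)*(cB 1)))-(m*(MA 0 1)+(MB 0 1))*(m*((MA 0 1)*(cA 0)+(MA 1 1)*(cA 1))+((MB 0 1)*(cB 0)+(MB 1 1)*(cB 1))))/((m*(MA 0 0)+(MB 0 0))*(m*(MA 1 1)+(MB 1 1))-(m*(MA 0 1)+(MB 0 1))*(m*(MA 0 1)+(MB 0 1)))), (((m*(MA 0 0)+(MB 0 0))*(m*((MA 0 1)*(cA 0)+(MA 1 1)*(cA 1))+((MB 0 1)*(cB 0)+(MB 1 1)*(cB 1)))-(m*(MA 0 1)+(MB 0 1))*(m*((MA 0 0)*(cA 0)+(MA 0 1)*(cA 1))+((MB 0 0)*(cB 0)+(MB 0 1)*(cB 1))))/((m*(MA 0 0)+(MB 0 0))*(m*(MA 1 1)+(MB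 1 1))-(m*(MA 0 1)+(MB 0 1))*(m*(MA 0 1)+(MB 0 1))))], ?_, ?_⟩
    · show dotProduct (![(((m*(MA 1 1)+(MB 1 1))*(m*((MA 0 0)*(cA 0)+(MA 0 1)*(cA 1))+((MB 0 0)*(cB 0)+(MB 0 1)*(cB 1)))-(m*(MA 0 1)+(MB 0 1))*(m*((MA 0 1)*(cA 0)+(MA 1 1)*(cA 1))+((MB 0 1)*(cB 0)+(MB 1 1)*(cB 1))))/((m*(MA 0 0)+(MB 0 0))*(m*(MA 1 1)+(MB 1 1))-(m*(MA 0 1)+(MB 0 1))*(m*(MA 0 1)+(MB 0 1)))), (((m*(MA 0 0)+(MB 0 0))*(m*((MA 0 1)*(cA 0)+(MA 1 1)*(cA 1))+((MB 0 1)*(cB 0)+(MB 1 1)*(cB 1)))-(m*(MA 0 1)+(MB 0 1))*(m*((MA 0 0)*(cA 0)+(MA 0 1)*(cA 1))+((MB 0 0)*(cB 0)+(MB 0 1)*(cB 1))))/((m*(MA 0 0)+(MB 0 0))*(m*(MA 1 1)+(MB 1 1))-(m*(MA 0 1)+(MB 0 1))*(m*(MA 0 1)+(MB 0 1))))] - cA)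 (MA.mulVec (![(((m*(MA 1 1)+(MB 1 1))*(m*((MA 0 0)*(cA 0)+(MA 0 1)*(cA 1))+((MB 0 0)*(cB 0)+(MB 0 1)*(cB 1)))-(m*(MA 0 1)+(MB 0 1))*(m*((MA 0 1)*(cA 0)+(MA 1 1)*(cA 1))+((MB 0 1)*(cB 0)+(MB 1 1)*(cB 1))))/((m*(MA 0 0)+(MB 0 0))*(m*(MA 1 1)+(MB 1 1))-(m*(MA 0 1)+(MB 0 1))*(m*(MA 0 1)+(MB 0 1)))), (((m*(MA 0 0)+(MB 0 0))*(m*((MA 0 1)*(cA 0)+(MA 1 1)*(cA 1))+((MB 0 1)*(cB 0)+(MB 1 1)*(cB 1)))-(m*(MA 0 1)+(MB 0 1))*(m*((MA 0 0)*(cA 0)+(MA 0 1)*(cA 1))+((MB 0 0)*(cB 0)+(MB 0 1)*(cB 1))))/((m*(MA 0 0)+(MB 0 0))*(m*(MA 1 1)+(MB 1 1))-(m*(MA 0 1)+(MB 0 1))*(m*(MA 0 1)+(MB 0 1))))] - cA)) ≤ 1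
      rw [quad_eq MA hA10]
      simp only [Matrix.cons_val_zero, Matrix.cons_val_one, Matrix.head_cons]
      linarith [hQAs]
    · show dotProduct (![(((m*(MA 1 1)+(MB 1 1))*(m*((MA 0 0)*(cA 0)+(MA 0 1)*(cA 1))+((MB 0 0)*(cB 0)+(MB 0 1)*(cB 1)))-(m*(MA 0 1)+(MB 0 1))*(m*((MA 0 1)*(cA 0)+(MA 1 1)*(cA 1))+((MB 0 1)*(cB 0)+(MB 1 1)*(cB 1))))/((m*(MA 0 0)+(MB 0 0))*(m*(MA 1 1)+(MB 1 1))-(m*(MA 0 1)+(MB 0 1))*(m*(MA 0 1)+(MB 0 1)))), (((m*(MA 0 0)+(MB 0 0))*(m*((MA 0 1)*(cA 0)+(MA 1 1)*(cA 1))+((MB 0 1)*(cB 0)+(MB 1 1)*(cB 1)))-(m*(MA 0 1)+(MB 0 1))*(m*((MA 0 0)*(cA 0)+(MA 0 1)*(cA 1))+((MB 0 0)*(cB 0)+(MB 0 1)*(cB 1))))/((m*(MA 0 0)+(MB 0 0))*(m*(MA 1 1)+(MB 1 1))-(m*(MA 0 1)+(MB 0 1))*(m*(MA 0 1)+(MB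 0 1))))] - cB) (MB.mulVec (![(((m*(MA 1 1)+(MB 1 1))*(m*((MA 0 0)*(cA 0)+(MA 0 1)*(cA 1))+((MB 0 0)*(cB 0)+(MB 0 1)*(cB 1)))-(m*(MA 0 1)+(MB 0 1))*(m*((MA 0 1)*(cA 0)+(MA 1 1)*(cA 1))+((MB 0 1)*(cB 0)+(MB 1 1)*(cB 1))))/((m*(MA 0 0)+(MB 0 0))*(m*(MA 1 1)+(MB 1 1))-(m*(MA 0 1)+(MB 0 1))*(m*(MA 0 1)+(MB 0 1)))), (((m*(MA 0 0)+(MB 0 0))*(m*((MA 0 1)*(cA 0)+(MA 1 1)*(cA 1))+((MB 0 1)*(cB 0)+(MB 1 1)*(cB 1)))-(m*(MA 0 1)+(MB 0 1))*(m*((MA 0 0)*(cA 0)+(MA 0 1)*(cA 1))+((MB 0 0)*(cB 0)+(MB 0 1)*(cB 1))))/((m*(MA 0 0)+(MB 0 0))*(m*(MA 1 1)+(MB 1 1))-(m*(MA 0 1)+(MB 0 1))*(m*(MA 0 1)+(MB 0 1))))] - cB)) ≤ 1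
      rw [quad_eq MB hB10]
      simp only [Matrix.cons_val_zero, Matrix.cons_val_one, Matrix.head_cons]
      linarith [hQBs]
end
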